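/- arXiv:1705.03296 — 5 statements merged into one kernel-verified Lean document; each statement's English description precedes it below -/
import Mathlib

section
/- Let p ∈ [2, ∞) and let 𝒢 = (V, ω) be a finite weighted graph with all degrees positive. Then ‖A_𝒢‖_{B(L^p_0(V,ν;ℂ))} ≤ 2^{1−2/p} · ‖A_𝒢‖_{B(L²_0(V,ν;ℂ))}^{2/p}. -/
open scoped BigOperators
open Finset MeasureTheory

set_option maxHeartbeats 1000000

noncomputable section

variable {V : Type*}

def wdeg [Fintype V] (ω : V → V → ℝ) (s : V) : ℝ := ∑ t, ω s t

def nu [Fintype V] (ω : V → V → ℝ) (s : V) : ℝ := wdeg ω s / ∑ t, wdeg ω t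

def edgeP [Fintype V] (ω : V → V → ℝ) (s t : V) : ℝ := ω s t / ∑ u, ∑ v, ω u v

def SymmW (ω : V → V → ℝ) : Prop := ∀ s t, ω s t = ω t s

def NonnegW (ω : V → V → ℝ) : Prop := ∀ s t, 0 ≤ ω s t

def ConnW (ω : V → V → ℝ) : Prop := (SimpleGraph.fromRel fun s t => 0 < ω s t).Connected

def lpNormW [Fintype V] (ω : V → V → ℝ) (p : ℝ) {X : Type*} [NormedAddCommGroup X]
    (f : V → X) : ℝ := (∑ s, nu ω s * ‖f s‖ ^ p) ^ (1 / p)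

def gradNormW [Fintype V] (ω : V → V → ℝ) (p : ℝ) {X : Type*} [NormedAddCommGroup X]
    (f : V → X) : ℝ := (∑ s, ∑ t, edgeP ω s t * ‖f t - f s‖ ^ p) ^ (1 / p)

def poincareConst [Fintype V] (ω : V → V → ℝ) (p : ℝ) (X : Type*) [NormedAddCommGroup X] : ℝ :=
  sInf {π : ℝ | 0 ≤ π ∧
    ∀ f : V → X, (⨅ x : X, lpNormW ω p fun s => f s - x) ≤ π * gradNormW ω p f}

def markovW [Fintype V] (ω : V → V → ℝ) {X : Type*} [AddCommGroup X] [Module ℝ X]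
    (f : V → X) (s : V) : X := (wdeg ω s)⁻¹ • ∑ t, ω s t • f t

/-- Operator norm of the Markov operator restricted to mean-zero functions in `L^p(V,ν;ℂ)`. -/
def opNorm0 {V : Type*} [Fintype V] (ω : V → V → ℝ) (p : ℝ) : ℝ :=
  sInf {K : ℝ | 0 ≤ K ∧ ∀ f : V → ℂ, (∑ s, (nu ω s : ℂ) * f s) = 0 →
    lpNormW ω p (markovW ω f) ≤ K * lpNormW ω p f}

namespace Stmt10Aux

open Complex

variable {V : Type*} [Fintype V]

/-- `T = A - P`. -/
def Tm [Fintype V] (ω : V → V → ℝ) (f : V → ℂ) (s : V) : ℂ :=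
  markovW ω f s - ∑ t, (nu ω t : ℂ) * f t

section Basic

variable {ω : V → V → ℝ}

lemma wdeg_nonneg (hnn : NonnegW ω) (s : V) : 0 ≤ wdeg ω s :=
  Finset.sum_nonneg fun t _ => hnn s t

lemma sumdeg_pos [Nonempty V] (hdeg : ∀ s, 0 < wdeg ω s) : 0 < ∑ t, wdeg ω t :=
  Finset.sum_pos (fun t _ => hdeg t) univ_nonempty

lemma nu_nonneg (hnn : NonnegW ω) (s : V) : 0 ≤ nu ω s :=
  div_nonneg (wdeg_nonneg hnn s) (Finset.sum_nonneg fun t _ => wdeg_nonneg hnn t)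

lemma nu_pos [Nonempty V] (hdeg : ∀ s, 0 < wdeg ω s) (s : V) : 0 < nu ω s :=
  div_pos (hdeg s) (sumdeg_pos hdeg)

lemma sum_nu [Nonempty V] (hdeg : ∀ s, 0 < wdeg ω s) : ∑ s, nu ω s = 1 := by
  simp only [nu]
  rw [← Finset.sum_div]
  exact div_self (sumdeg_pos hdeg).ne'

lemma row_sum (hdeg : ∀ s, 0 < wdeg ω s) (s : V) : ∑ t, ω s t / wdeg ω s = 1 := by
  rw [← Finset.sum_div]
  exact div_self (hdeg s).ne'

lemma row_nonneg (hnn : NonnegW ω) (hdeg : ∀ s, 0 < wdeg ω s) (s t : V) :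
    0 ≤ ω s t / wdeg ω s := div_nonneg (hnn s t) (hdeg s).le

lemma exchange [Nonempty V] (hsym : SymmW ω) (hdeg : ∀ s, 0 < wdeg ω s) (t : V) :
    ∑ s, nu ω s * (ω s t / wdeg ω s) = nu ω t := by
  have hD := (sumdeg_pos hdeg).ne'
  have h1 : ∀ s, nu ω s * (ω s t / wdeg ω s) = ω t s / ∑ u, wdeg ω u := by
    intro s
    rw [nu, hsym s t]
    rw [div_mul_div_comm, mul_comm (wdeg ω s) (ω t s),
      mul_div_mul_right _ _ (hdeg s).ne']
  simp only [h1]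
  rw [← Finset.sum_div]
  rfl

lemma markov_eq (hdeg : ∀ s, 0 < wdeg ω s) (f : V → ℂ) (s : V) :
    markovW ω f s = ∑ t, ((ω s t / wdeg ω s : ℝ) : ℂ) * f t := by
  rw [markovW, Complex.real_smul, Finset.mul_sum]
  congr 1
  ext t
  rw [Complex.real_smul]
  push_cast
  field_simp

lemma markov_norm_le (hnn : NonnegW ω) (hdeg : ∀ s, 0 < wdeg ω s) (f : V → ℂ) {C : ℝ}
    (hC : ∀ t, ‖f t‖ ≤ C) (s : V) : ‖markovW ω f s‖ ≤ C := by
  rw [markov_eq hdeg]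
  calc ‖∑ t, ((ω s t / wdeg ω s : ℝ) : ℂ) * f t‖
      ≤ ∑ t, ‖((ω s t / wdeg ω s : ℝ) : ℂ) * f t‖ := norm_sum_le _ _
    _ ≤ ∑ t, (ω s t / wdeg ω s) * C := by
        refine Finset.sum_le_sum fun t _ => ?_
        rw [norm_mul, Complex.norm_real, Real.norm_of_nonneg (row_nonneg hnn hdeg s t)]
        exact mul_le_mul_of_nonneg_left (hC t) (row_nonneg hnn hdeg s t)
    _ = C := by rw [← Finset.sum_mul, row_sum hdeg, one_mul]

lemma Tm_norm_le [Nonempty V] (hnn : NonnegW ω) (hdeg : ∀ s, 0 < wdeg ω s) (f : V → ℂ) {C : ℝ}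
    (hC : ∀ t, ‖f t‖ ≤ C) (s : V) : ‖Tm ω f s‖ ≤ 2 * C := by
  have h2 : ‖∑ t, (nu ω t : ℂ) * f t‖ ≤ C := by
    calc ‖∑ t, (nu ω t : ℂ) * f t‖ ≤ ∑ t, ‖(nu ω t : ℂ) * f t‖ := norm_sum_le _ _
      _ ≤ ∑ t, nu ω t * C := by
          refine Finset.sum_le_sum fun t _ => ?_
          rw [norm_mul, Complex.norm_real, Real.norm_of_nonneg (nu_nonneg hnn t)]
          exact mul_le_mul_of_nonneg_left (hC t) (nu_nonneg hnn t)
      _ = C := by rw [← Finset.sum_mul, sum_nu hdeg, one_mul]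
  calc ‖Tm ω f s‖ ≤ ‖markovW ω f s‖ + ‖∑ t, (nu ω t : ℂ) * f t‖ := norm_sub_le _ _
    _ ≤ C + C := add_le_add (markov_norm_le hnn hdeg f hC s) h2
    _ = 2 * C := by ring

end Basic

section L2

variable {ω : V → V → ℝ}

lemma pair_CS (hnn : NonnegW ω) (g h : V → ℂ) :
    ‖∑ s, (nu ω s : ℂ) * (g s * h s)‖ ≤
      Real.sqrt (∑ s, nu ω s * ‖g s‖ ^ (2:ℝ)) * Real.sqrt (∑ s, nu ω s * ‖h s‖ ^ (2:ℝ)) := by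
  have h1 : ‖∑ s, (nu ω s : ℂ) * (g s * h s)‖ ≤
      ∑ s, (Real.sqrt (nu ω s) * ‖g s‖) * (Real.sqrt (nu ω s) * ‖h s‖) := by
    refine (norm_sum_le _ _).trans (le_of_eq (Finset.sum_congr rfl fun s _ => ?_))
    rw [norm_mul, norm_mul, Complex.norm_real, Real.norm_of_nonneg (nu_nonneg hnn s)]
    nth_rewrite 1 [← Real.mul_self_sqrt (nu_nonneg hnn s)]
    ring
  refine h1.trans ((Real.sum_mul_le_sqrt_mul_sqrt Finset.univ _ _).trans (le_of_eq ?_))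
  congr 1 <;>
  · congr 1
    refine Finset.sum_congr rfl fun s _ => ?_
    rw [mul_pow, Real.sq_sqrt (nu_nonneg hnn s), Real.rpow_two]

lemma norm_rpow_two_eq (z : ℂ) : ‖z‖ ^ (2:ℝ) = Complex.normSq z := by
  rw [Real.rpow_two, Complex.sq_norm]

lemma sub_mean_le [Nonempty V] (hnn : NonnegW ω) (hdeg : ∀ s, 0 < wdeg ω s) (f : V → ℂ) :
    ∑ s, nu ω s * ‖f s - ∑ t, (nu ω t : ℂ) * f t‖ ^ (2:ℝ) ≤ ∑ s, nu ω s * ‖f s‖ ^ (2:ℝ) := by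
  set c := ∑ t, (nu ω t : ℂ) * f t with hc
  simp only [norm_rpow_two_eq]
  have hsum : ∑ s, nu ω s * ((f s) * (starRingEnd ℂ) c).re = Complex.normSq c := by
    have e1 : ∀ s, nu ω s * ((f s) * (starRingEnd ℂ) c).re
        = (((nu ω s : ℂ) * f s) * (starRingEnd ℂ) c).re := fun s => by
      rw [mul_assoc, Complex.re_ofReal_mul]
    simp only [e1]
    rw [← Complex.re_sum, ← Finset.sum_mul, ← hc, Complex.mul_conj, Complex.ofReal_re]
  have expand : ∑ s, nu ω s * Complex.normSq (f s - c)
      = (∑ s, nu ω s * Complex.normSq (f s))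
        - 2 * (∑ s, nu ω s * ((f s) * (starRingEnd ℂ) c).re)
        + (∑ s, nu ω s) * Complex.normSq c := by
    rw [Finset.sum_mul, Finset.mul_sum, ← Finset.sum_sub_distrib, ← Finset.sum_add_distrib]
    refine Finset.sum_congr rfl fun s _ => ?_
    rw [Complex.normSq_sub]
    ring
  rw [expand, hsum, sum_nu hdeg, one_mul]
  have := Complex.normSq_nonneg c
  linarith

lemma markov_norm_le' (hnn : NonnegW ω) (hdeg : ∀ s, 0 < wdeg ω s) (f : V → ℂ) (s : V) :
    ‖markovW ω f s‖ ≤ ∑ t, (ω s t / wdeg ω s) * ‖f t‖ := by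
  rw [markov_eq hdeg]
  refine (norm_sum_le _ _).trans (le_of_eq (Finset.sum_congr rfl fun t _ => ?_))
  rw [norm_mul, Complex.norm_real, Real.norm_of_nonneg (row_nonneg hnn hdeg s t)]

lemma contraction (hsym : SymmW ω) (hnn : NonnegW ω) (hdeg : ∀ s, 0 < wdeg ω s) (f : V → ℂ) :
    ∑ s, nu ω s * ‖markovW ω f s‖ ^ (2:ℝ) ≤ ∑ s, nu ω s * ‖f s‖ ^ (2:ℝ) := by
  rcases isEmpty_or_nonempty V with h | h
  · simp
  have pointwise : ∀ s, ‖markovW ω f s‖ ^ (2:ℝ) ≤ ∑ t, (ω s t / wdeg ω s) * ‖f t‖ ^ (2:ℝ) := by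
    intro s
    simp only [Real.rpow_two]
    calc ‖markovW ω f s‖ ^ 2 ≤ (∑ t, (ω s t / wdeg ω s) * ‖f t‖) ^ 2 := by
          refine pow_le_pow_left₀ (norm_nonneg _) (markov_norm_le' hnn hdeg f s) 2
      _ ≤ (∑ t, (ω s t / wdeg ω s)) * ∑ t, (ω s t / wdeg ω s) * ‖f t‖ ^ 2 := by
          refine sum_sq_le_sum_mul_sum_of_sq_eq_mul Finset.univ
            (fun t _ => row_nonneg hnn hdeg s t)
            (fun t _ => mul_nonneg (row_nonneg hnn hdeg s t) (sq_nonneg _)) (fun t _ => ?_)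
          rw [mul_pow]
          ring
      _ = ∑ t, (ω s t / wdeg ω s) * ‖f t‖ ^ 2 := by rw [row_sum hdeg, one_mul]
  calc ∑ s, nu ω s * ‖markovW ω f s‖ ^ (2:ℝ)
      ≤ ∑ s, nu ω s * ∑ t, (ω s t / wdeg ω s) * ‖f t‖ ^ (2:ℝ) := by
        refine Finset.sum_le_sum fun s _ => mul_le_mul_of_nonneg_left (pointwise s) (nu_nonneg hnn s)
    _ = ∑ t, (∑ s, nu ω s * (ω s t / wdeg ω s)) * ‖f t‖ ^ (2:ℝ) := by
        simp_rw [Finset.mul_sum, Finset.sum_mul]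
        rw [Finset.sum_comm]
        exact Finset.sum_congr rfl fun t _ => Finset.sum_congr rfl fun s _ => by ring
    _ = ∑ t, nu ω t * ‖f t‖ ^ (2:ℝ) := by
        exact Finset.sum_congr rfl fun t _ => by rw [exchange hsym hdeg t]

end L2

section K2

variable {ω : V → V → ℝ}

lemma sum_lp_nonneg (hnn : NonnegW ω) (p : ℝ) (f : V → ℂ) :
    0 ≤ ∑ s, nu ω s * ‖f s‖ ^ p :=
  Finset.sum_nonneg fun s _ => mul_nonneg (nu_nonneg hnn s) (Real.rpow_nonneg (norm_nonneg _) _)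

lemma lpNormW_nonneg (hnn : NonnegW ω) (p : ℝ) (f : V → ℂ) : 0 ≤ lpNormW ω p f :=
  Real.rpow_nonneg (sum_lp_nonneg hnn p f) _

lemma lpNormW_mono (hnn : NonnegW ω) {p : ℝ} (hp : 0 ≤ p) (f g : V → ℂ)
    (h : ∑ s, nu ω s * ‖f s‖ ^ p ≤ ∑ s, nu ω s * ‖g s‖ ^ p) :
    lpNormW ω p f ≤ lpNormW ω p g :=
  Real.rpow_le_rpow (sum_lp_nonneg hnn p f) h (by positivity)

lemma one_mem_S2 (hsym : SymmW ω) (hnn : NonnegW ω) (hdeg : ∀ s, 0 < wdeg ω s) :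
    (1:ℝ) ∈ {K : ℝ | 0 ≤ K ∧ ∀ f : V → ℂ, (∑ s, (nu ω s : ℂ) * f s) = 0 →
      lpNormW ω 2 (markovW ω f) ≤ K * lpNormW ω 2 f} := by
  refine ⟨zero_le_one, fun f _ => ?_⟩
  rw [one_mul]
  exact lpNormW_mono hnn (by norm_num : (0:ℝ) ≤ 2) _ _ (contraction hsym hnn hdeg f)

lemma opNorm0_two_nonneg (hsym : SymmW ω) (hnn : NonnegW ω) (hdeg : ∀ s, 0 < wdeg ω s) :
    0 ≤ opNorm0 ω 2 :=
  le_csInf ⟨1, one_mem_S2 hsym hnn hdeg⟩ fun _ hK => hK.1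

lemma hK2 (hsym : SymmW ω) (hnn : NonnegW ω) (hdeg : ∀ s, 0 < wdeg ω s) (f : V → ℂ)
    (h0 : ∑ s, (nu ω s : ℂ) * f s = 0) :
    lpNormW ω 2 (markovW ω f) ≤ opNorm0 ω 2 * lpNormW ω 2 f := by
  have hne : Set.Nonempty {K : ℝ | 0 ≤ K ∧ ∀ f : V → ℂ, (∑ s, (nu ω s : ℂ) * f s) = 0 →
      lpNormW ω 2 (markovW ω f) ≤ K * lpNormW ω 2 f} := ⟨1, one_mem_S2 hsym hnn hdeg⟩
  have key : ∀ ε : ℝ, 0 < ε →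
      lpNormW ω 2 (markovW ω f) ≤ (opNorm0 ω 2 + ε) * lpNormW ω 2 f := by
    intro ε hε
    obtain ⟨K, hK, hKlt⟩ := Real.lt_sInf_add_pos hne hε
    exact (hK.2 f h0).trans (mul_le_mul_of_nonneg_right hKlt.le (lpNormW_nonneg hnn 2 f))
  rcases eq_or_lt_of_le (lpNormW_nonneg hnn 2 f) with hx | hx
  · have := key 1 one_pos
    rw [← hx] at this ⊢
    simpa using this
  · by_contra hcon
    push_neg at hcon
    set L := lpNormW ω 2 (markovW ω f)
    set x := lpNormW ω 2 f
    have hεp : 0 < (L - opNorm0 ω 2 * x) / (2 * x) := by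
      apply div_pos (by linarith) (by linarith)
    have := key _ hεp
    rw [add_mul, div_mul_eq_mul_div, mul_comm (2:ℝ) x, ← div_div,
      mul_div_assoc, div_self hx.ne', mul_one] at this
    linarith

lemma Tm_l2 (hsym : SymmW ω) (hnn : NonnegW ω) (hdeg : ∀ s, 0 < wdeg ω s) [Nonempty V]
    (f : V → ℂ) :
    lpNormW ω 2 (Tm ω f) ≤ opNorm0 ω 2 * lpNormW ω 2 f := by
  set c := ∑ t, (nu ω t : ℂ) * f t with hc
  have hTm : Tm ω f = markovW ω (fun t => f t - c) := by
    funext s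
    have hsplit : markovW ω (fun t => f t - c) s = markovW ω f s - markovW ω (fun _ => c) s := by
      simp only [markovW, smul_sub, Finset.sum_sub_distrib, smul_sub]
    have hconst : markovW ω (fun _ : V => c) s = c := by
      rw [markovW, ← Finset.sum_smul, smul_smul,
        show (wdeg ω s)⁻¹ * ∑ t, ω s t = 1 from inv_mul_cancel₀ (hdeg s).ne', one_smul]
    rw [Tm, hsplit, hconst]
  have hmean : ∑ s, (nu ω s : ℂ) * (f s - c) = 0 := by
    simp only [mul_sub, Finset.sum_sub_distrib, ← Finset.sum_mul, ← hc]
    have : (∑ s, (nu ω s : ℂ)) = 1 := by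
      rw [← Complex.ofReal_sum, sum_nu hdeg, Complex.ofReal_one]
    rw [this, one_mul, sub_self]
  rw [hTm]
  refine (hK2 hsym hnn hdeg _ hmean).trans ?_
  refine mul_le_mul_of_nonneg_left ?_ (opNorm0_two_nonneg hsym hnn hdeg)
  exact lpNormW_mono hnn (by norm_num : (0:ℝ) ≤ 2) _ _ (sub_mean_le hnn hdeg f)

end K2

section Key

variable {ω : V → V → ℝ}

/-- Holomorphic family through `f` (endpoints `L²` at `re z = 1`, `L^∞` at `re z = 0`). -/
def fzv (p : ℝ) (f : V → ℂ) (z : ℂ) (t : V) : ℂ :=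
  if f t = 0 then 0
  else Complex.exp (((p / 2 * Real.log ‖f t‖ : ℝ) : ℂ) * z) * (f t / (‖f t‖ : ℂ))

/-- Holomorphic family through `g` (endpoints `L²` at `re z = 1`, `L¹` at `re z = 0`). -/
def gzv (q : ℝ) (g : V → ℂ) (z : ℂ) (s : V) : ℂ :=
  if g s = 0 then 0
  else Complex.exp (((q * Real.log ‖g s‖ : ℝ) : ℂ) * (1 - z / 2)) * (g s / (‖g s‖ : ℂ))

lemma norm_div_norm (w : ℂ) (h : w ≠ 0) : ‖w / (‖w‖ : ℂ)‖ = 1 := by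
  rw [norm_div, Complex.norm_real, Real.norm_of_nonneg (norm_nonneg _)]
  exact div_self (norm_ne_zero_iff.mpr h)

lemma norm_fzv (p : ℝ) (f : V → ℂ) (z : ℂ) (t : V) :
    ‖fzv p f z t‖ = if f t = 0 then 0 else ‖f t‖ ^ (p / 2 * z.re) := by
  rw [fzv]
  split_ifs with h
  · simp
  rw [norm_mul, norm_div_norm _ h, mul_one, Complex.norm_exp,
    Complex.re_ofReal_mul, Real.rpow_def_of_pos (norm_pos_iff.mpr h)]
  congr 1
  ring

lemma norm_gzv (q : ℝ) (g : V → ℂ) (z : ℂ) (s : V) :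
    ‖gzv q g z s‖ = if g s = 0 then 0 else ‖g s‖ ^ (q * (1 - z.re / 2)) := by
  rw [gzv]
  split_ifs with h
  · simp
  rw [norm_mul, norm_div_norm _ h, mul_one, Complex.norm_exp,
    Complex.re_ofReal_mul, Real.rpow_def_of_pos (norm_pos_iff.mpr h)]
  have : (1 - z / 2).re = 1 - z.re / 2 := by
    simp [Complex.sub_re, Complex.one_re, Complex.div_re]
  rw [this]
  congr 1
  ring

lemma fzv_theta {p : ℝ} (hp : 0 < p) (f : V → ℂ) (t : V) :
    fzv p f (((2 / p : ℝ) : ℂ)) t = f t := by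
  rw [fzv]
  split_ifs with h
  · exact h.symm
  rw [← Complex.ofReal_mul, ← Complex.ofReal_exp]
  have he : p / 2 * Real.log ‖f t‖ * (2 / p) = Real.log ‖f t‖ := by
    field_simp
  rw [he, Real.exp_log (norm_pos_iff.mpr h), mul_div_assoc', mul_comm,
    mul_div_assoc, div_self (Complex.ofReal_ne_zero.mpr (norm_ne_zero_iff.mpr h)), mul_one]

lemma gzv_theta {p : ℝ} (hp : 2 ≤ p) (g : V → ℂ) (s : V) :
    gzv (p / (p - 1)) g (((2 / p : ℝ) : ℂ)) s = g s := by
  have hp0 : p ≠ 0 := by linarith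
  have hp1 : p - 1 ≠ 0 := by intro h; nlinarith [h]
  rw [gzv]
  split_ifs with h
  · exact h.symm
  have hz : (1 : ℂ) - ((2 / p : ℝ) : ℂ) / 2 = (((p - 1) / p : ℝ) : ℂ) := by
    have hpc : (p : ℂ) ≠ 0 := by exact_mod_cast hp0
    push_cast [Complex.ofReal_div]
    field_simp
  rw [hz, ← Complex.ofReal_mul, ← Complex.ofReal_exp]
  have he : p / (p - 1) * Real.log ‖g s‖ * ((p - 1) / p) = Real.log ‖g s‖ := by
    field_simp
  rw [he, Real.exp_log (norm_pos_iff.mpr h), mul_div_assoc', mul_comm,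
    mul_div_assoc, div_self (Complex.ofReal_ne_zero.mpr (norm_ne_zero_iff.mpr h)), mul_one]

lemma fzv_differentiable (p : ℝ) (f : V → ℂ) (t : V) :
    Differentiable ℂ fun z => fzv p f z t := by
  unfold fzv
  by_cases h : f t = 0
  · simp [h]
  · simp only [h, if_false]
    exact (((differentiable_const _).mul differentiable_id).cexp).mul (differentiable_const _)

lemma gzv_differentiable (q : ℝ) (g : V → ℂ) (s : V) :
    Differentiable ℂ fun z => gzv q g z s := by
  unfold gzv
  by_cases h : g s = 0
  · simp [h]
  · simp only [h, if_false]
    exact (((differentiable_const _).mul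
      ((differentiable_const _).sub (differentiable_id.div_const _))).cexp).mul
      (differentiable_const _)

/-- The function to which the three-lines theorem is applied. -/
def Ffun (ω : V → V → ℝ) [Fintype V] (p q : ℝ) (f g : V → ℂ) : ℂ → ℂ := fun z =>
  ∑ s, (nu ω s : ℂ) * (gzv q g z s * Tm ω (fzv p f z) s)

lemma Ffun_differentiable (p q : ℝ) (f g : V → ℂ) :
    Differentiable ℂ (Ffun ω p q f g) := by
  apply Differentiable.fun_sum
  intro s _
  refine (differentiable_const _).mul ((gzv_differentiable q g s).mul ?_)
  have : (fun z => Tm ω (fzv p f z) s) = fun z =>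
      (wdeg ω s)⁻¹ • (∑ t, ω s t • fzv p f z t) - ∑ t, (nu ω t : ℂ) * fzv p f z t := by
    funext z
    rfl
  rw [this]
  apply Differentiable.sub
  · exact Differentiable.const_smul
      (Differentiable.fun_sum fun t _ => (fzv_differentiable p f t).const_smul (ω s t)) (wdeg ω s)⁻¹
  · exact Differentiable.fun_sum fun t _ => (differentiable_const _).mul (fzv_differentiable p f t)

lemma norm_fzv_strip (p : ℝ) (f : V → ℂ) (t : V) {z : ℂ} (hz0 : 0 ≤ z.re) (hz1 : z.re ≤ 1) :
    ‖fzv p f z t‖ ≤ Real.exp |p / 2 * Real.log ‖f t‖| := by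
  rw [norm_fzv]
  split_ifs with h
  · positivity
  rw [Real.rpow_def_of_pos (norm_pos_iff.mpr h)]
  apply Real.exp_le_exp.mpr
  calc Real.log ‖f t‖ * (p / 2 * z.re) = (p / 2 * Real.log ‖f t‖) * z.re := by ring
    _ ≤ |p / 2 * Real.log ‖f t‖| * z.re := mul_le_mul_of_nonneg_right (le_abs_self _) hz0
    _ ≤ |p / 2 * Real.log ‖f t‖| := mul_le_of_le_one_right (abs_nonneg _) hz1

lemma norm_gzv_strip (q : ℝ) (g : V → ℂ) (s : V) {z : ℂ} (hz0 : 0 ≤ z.re) (hz1 : z.re ≤ 1) :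
    ‖gzv q g z s‖ ≤ Real.exp |q * Real.log ‖g s‖| := by
  rw [norm_gzv]
  split_ifs with h
  · positivity
  rw [Real.rpow_def_of_pos (norm_pos_iff.mpr h)]
  apply Real.exp_le_exp.mpr
  calc Real.log ‖g s‖ * (q * (1 - z.re / 2)) = (q * Real.log ‖g s‖) * (1 - z.re / 2) := by ring
    _ ≤ |q * Real.log ‖g s‖| * (1 - z.re / 2) := by
        refine mul_le_mul_of_nonneg_right (le_abs_self _) (by linarith)
    _ ≤ |q * Real.log ‖g s‖| := mul_le_of_le_one_right (abs_nonneg _) (by linarith)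

lemma norm_fzv_line0 (p : ℝ) (f : V → ℂ) (t : V) {z : ℂ} (hz : z.re = 0) :
    ‖fzv p f z t‖ ≤ 1 := by
  rw [norm_fzv, hz]
  split_ifs with h
  · exact zero_le_one
  · rw [mul_zero, Real.rpow_zero]

lemma norm_gzv_line0 {q : ℝ} (hq : q ≠ 0) (g : V → ℂ) (s : V) {z : ℂ} (hz : z.re = 0) :
    ‖gzv q g z s‖ = ‖g s‖ ^ q := by
  rw [norm_gzv, hz]
  split_ifs with h
  · rw [h, norm_zero, Real.zero_rpow hq]
  · norm_num

lemma sq_fzv_line1 {p : ℝ} (hp : p ≠ 0) (f : V → ℂ) (t : V) {z : ℂ} (hz : z.re = 1) :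
    ‖fzv p f z t‖ ^ (2:ℝ) = ‖f t‖ ^ p := by
  rw [norm_fzv, hz]
  split_ifs with h
  · rw [h, norm_zero, Real.zero_rpow hp, Real.zero_rpow (by norm_num : (2:ℝ) ≠ 0)]
  · rw [← Real.rpow_mul (norm_nonneg _)]
    congr 1
    ring

lemma sq_gzv_line1 {q : ℝ} (hq : q ≠ 0) (g : V → ℂ) (s : V) {z : ℂ} (hz : z.re = 1) :
    ‖gzv q g z s‖ ^ (2:ℝ) = ‖g s‖ ^ q := by
  rw [norm_gzv, hz]
  split_ifs with h
  · rw [h, norm_zero, Real.zero_rpow hq, Real.zero_rpow (by norm_num : (2:ℝ) ≠ 0)]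
  · rw [← Real.rpow_mul (norm_nonneg _)]
    congr 1
    ring

lemma key [Nonempty V] (hsym : SymmW ω) (hnn : NonnegW ω) (hdeg : ∀ s, 0 < wdeg ω s)
    {p : ℝ} (hp : 2 ≤ p) (f g : V → ℂ)
    (hf : ∑ s, nu ω s * ‖f s‖ ^ p ≤ 1)
    (hg : ∑ s, nu ω s * ‖g s‖ ^ (p / (p - 1)) ≤ 1) :
    ‖∑ s, (nu ω s : ℂ) * (g s * Tm ω f s)‖ ≤
      2 ^ (1 - 2 / p) * opNorm0 ω 2 ^ (2 / p) := by
  have hp0 : (0:ℝ) < p := by linarith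
  have hq0 : p / (p - 1) ≠ 0 := by
    apply ne_of_gt
    apply div_pos hp0 (by linarith)
  set q := p / (p - 1) with hqdef
  set K := opNorm0 ω 2 with hKdef
  have hKnn : 0 ≤ K := opNorm0_two_nonneg hsym hnn hdeg
  set F := Ffun ω p q f g with hFdef
  set z : ℂ := ((2 / p : ℝ) : ℂ) with hzdef
  have hzre : z.re = 2 / p := Complex.ofReal_re _
  have hz2p0 : 0 ≤ 2 / p := by positivity
  have hz2p1 : 2 / p ≤ 1 := by
    rw [div_le_one hp0]; linarith
  have hz : z ∈ Complex.HadamardThreeLines.verticalClosedStrip 0 1 := by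
    show z.re ∈ Set.Icc (0:ℝ) 1
    rw [hzre]
    exact ⟨hz2p0, hz2p1⟩
  have hFz : F z = ∑ s, (nu ω s : ℂ) * (g s * Tm ω f s) := by
    rw [hFdef, Ffun]
    refine Finset.sum_congr rfl fun s _ => ?_
    rw [hqdef, gzv_theta hp g s]
    have hfz : fzv p f z = f := funext (fzv_theta hp0 f)
    rw [hfz]
  -- boundary estimate at re = 0
  have ha : ∀ w ∈ Complex.re ⁻¹' {0}, ‖F w‖ ≤ 2 := by
    intro w hw
    have hw0 : w.re = 0 := hw
    rw [hFdef, Ffun]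
    calc ‖∑ s, (nu ω s : ℂ) * (gzv q g w s * Tm ω (fzv p f w) s)‖
        ≤ ∑ s, nu ω s * (‖gzv q g w s‖ * ‖Tm ω (fzv p f w) s‖) := by
          refine (norm_sum_le _ _).trans (le_of_eq (Finset.sum_congr rfl fun s _ => ?_))
          rw [norm_mul, norm_mul, Complex.norm_real, Real.norm_of_nonneg (nu_nonneg hnn s)]
      _ ≤ ∑ s, nu ω s * (‖g s‖ ^ q * 2) := by
          refine Finset.sum_le_sum fun s _ => ?_
          refine mul_le_mul_of_nonneg_left ?_ (nu_nonneg hnn s)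
          rw [norm_gzv_line0 hq0 g s hw0]
          refine mul_le_mul_of_nonneg_left ?_ (Real.rpow_nonneg (norm_nonneg _) _)
          have := Tm_norm_le hnn hdeg (fzv p f w)
            (fun t => norm_fzv_line0 p f t hw0) s
          simpa using this
      _ = 2 * ∑ s, nu ω s * ‖g s‖ ^ q := by
          rw [Finset.mul_sum]
          exact Finset.sum_congr rfl fun s _ => by ring
      _ ≤ 2 * 1 := by
          refine mul_le_mul_of_nonneg_left hg (by norm_num)
      _ = 2 := by norm_num
  -- boundary estimate at re = 1
  have hb : ∀ w ∈ Complex.re ⁻¹' {1}, ‖F w‖ ≤ K := by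
    intro w hw
    have hw1 : w.re = 1 := hw
    rw [hFdef, Ffun]
    refine (pair_CS hnn (gzv q g w) (Tm ω (fzv p f w))).trans ?_
    have hA : Real.sqrt (∑ s, nu ω s * ‖gzv q g w s‖ ^ (2:ℝ)) ≤ 1 := by
      rw [show (1:ℝ) = Real.sqrt 1 from (Real.sqrt_one).symm]
      apply Real.sqrt_le_sqrt
      refine le_trans (le_of_eq (Finset.sum_congr rfl fun s _ => ?_)) hg
      rw [sq_gzv_line1 hq0 g s hw1]
    have hB2 : Real.sqrt (∑ s, nu ω s * ‖Tm ω (fzv p f w) s‖ ^ (2:ℝ)) ≤ K := by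
      have h2 := Tm_l2 hsym hnn hdeg (fzv p f w)
      have hfz2 : lpNormW ω 2 (fzv p f w) ≤ 1 := by
        rw [lpNormW]
        refine Real.rpow_le_one (sum_lp_nonneg hnn 2 _) ?_ (by norm_num)
        refine le_trans (le_of_eq (Finset.sum_congr rfl fun t _ => ?_)) hf
        rw [sq_fzv_line1 hp0.ne' f t hw1]
      have : Real.sqrt (∑ s, nu ω s * ‖Tm ω (fzv p f w) s‖ ^ (2:ℝ))
          = lpNormW ω 2 (Tm ω (fzv p f w)) := by
        rw [lpNormW, Real.sqrt_eq_rpow]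
      rw [this]
      calc lpNormW ω 2 (Tm ω (fzv p f w)) ≤ K * lpNormW ω 2 (fzv p f w) := h2
        _ ≤ K * 1 := mul_le_mul_of_nonneg_left hfz2 hKnn
        _ = K := mul_one K
    calc Real.sqrt (∑ s, nu ω s * ‖gzv q g w s‖ ^ (2:ℝ)) *
          Real.sqrt (∑ s, nu ω s * ‖Tm ω (fzv p f w) s‖ ^ (2:ℝ))
        ≤ 1 * K := mul_le_mul hA hB2 (Real.sqrt_nonneg _) zero_le_one
      _ = K := one_mul K
  -- differentiability and boundedness
  have hd : DiffContOnCl ℂ F (Complex.HadamardThreeLines.verticalStrip 0 1) :=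
    (Ffun_differentiable p q f g).diffContOnCl
  have hBdd : BddAbove ((norm ∘ F) '' Complex.HadamardThreeLines.verticalClosedStrip 0 1) := by
    set CF := ∑ t, Real.exp |p / 2 * Real.log ‖f t‖| with hCF
    set CG := ∑ s, Real.exp |q * Real.log ‖g s‖| with hCG
    have hCFnn : 0 ≤ CF := Finset.sum_nonneg fun t _ => (Real.exp_pos _).le
    refine ⟨(∑ s, nu ω s) * (CG * (2 * CF)), ?_⟩
    rintro y ⟨w, hw, rfl⟩
    have hw0 : 0 ≤ w.re := (Set.mem_Icc.mp hw).1
    have hw1 : w.re ≤ 1 := (Set.mem_Icc.mp hw).2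
    have hfb : ∀ t, ‖fzv p f w t‖ ≤ CF := fun t =>
      (norm_fzv_strip p f t hw0 hw1).trans
        (Finset.single_le_sum (f := fun t' => Real.exp |p / 2 * Real.log ‖f t'‖|)
          (fun t' _ => (Real.exp_pos _).le) (Finset.mem_univ t))
    have hgb : ∀ s, ‖gzv q g w s‖ ≤ CG := fun s =>
      (norm_gzv_strip q g s hw0 hw1).trans
        (Finset.single_le_sum (f := fun s' => Real.exp |q * Real.log ‖g s'‖|)
          (fun s' _ => (Real.exp_pos _).le) (Finset.mem_univ s))
    show ‖F w‖ ≤ _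
    rw [hFdef, Ffun]
    calc ‖∑ s, (nu ω s : ℂ) * (gzv q g w s * Tm ω (fzv p f w) s)‖
        ≤ ∑ s, nu ω s * (‖gzv q g w s‖ * ‖Tm ω (fzv p f w) s‖) := by
          refine (norm_sum_le _ _).trans (le_of_eq (Finset.sum_congr rfl fun s _ => ?_))
          rw [norm_mul, norm_mul, Complex.norm_real, Real.norm_of_nonneg (nu_nonneg hnn s)]
      _ ≤ ∑ s, nu ω s * (CG * (2 * CF)) := by
          refine Finset.sum_le_sum fun s _ => ?_
          refine mul_le_mul_of_nonneg_left ?_ (nu_nonneg hnn s)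
          exact mul_le_mul (hgb s) (Tm_norm_le hnn hdeg _ hfb s) (norm_nonneg _)
            (Finset.sum_nonneg fun s' _ => (Real.exp_pos _).le)
      _ = (∑ s, nu ω s) * (CG * (2 * CF)) := by rw [← Finset.sum_mul]
  have hmain := Complex.HadamardThreeLines.norm_le_interp_of_mem_verticalClosedStrip₀₁'
    F hz hd hBdd ha hb
  rw [hFz, hzre] at hmain
  calc ‖∑ s, (nu ω s : ℂ) * (g s * Tm ω f s)‖
      ≤ (2:ℝ) ^ (1 - 2/p) * K ^ (2/p) := hmain
    _ = 2 ^ (1 - 2 / p) * opNorm0 ω 2 ^ (2 / p) := by rw [hKdef]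

lemma Tm_smul (hdeg : ∀ s, 0 < wdeg ω s) (a : ℂ) (f : V → ℂ) (s : V) :
    Tm ω (fun t => a * f t) s = a * Tm ω f s := by
  rw [Tm, Tm, markov_eq hdeg, markov_eq hdeg, mul_sub, Finset.mul_sum, Finset.mul_sum]
  congr 1
  · exact Finset.sum_congr rfl fun t _ => by ring
  · exact Finset.sum_congr rfl fun t _ => by ring

lemma main_ineq [Nonempty V] (hsym : SymmW ω) (hnn : NonnegW ω) (hdeg : ∀ s, 0 < wdeg ω s)
    {p : ℝ} (hp : 2 ≤ p) (f : V → ℂ) (h0 : ∑ s, (nu ω s : ℂ) * f s = 0) :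
    lpNormW ω p (markovW ω f) ≤
      (2 ^ (1 - 2 / p) * opNorm0 ω 2 ^ (2 / p)) * lpNormW ω p f := by
  have hp0 : (0:ℝ) < p := by linarith
  have hp1 : (0:ℝ) < p - 1 := by linarith
  set C := (2:ℝ) ^ (1 - 2 / p) * opNorm0 ω 2 ^ (2 / p) with hCdef
  have hKnn : 0 ≤ opNorm0 ω 2 := opNorm0_two_nonneg hsym hnn hdeg
  have hCnn : 0 ≤ C := mul_nonneg (Real.rpow_nonneg (by norm_num) _) (Real.rpow_nonneg hKnn _)
  set Af := markovW ω f with hAf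
  set N := ∑ s, nu ω s * ‖Af s‖ ^ p with hN
  set Mf' := ∑ s, nu ω s * ‖f s‖ ^ p with hMf'
  have hNnn : 0 ≤ N := sum_lp_nonneg hnn p Af
  have hMnn : 0 ≤ Mf' := sum_lp_nonneg hnn p f
  rcases eq_or_lt_of_le hNnn with hN0 | hNpos
  · -- N = 0
    have : lpNormW ω p Af = 0 := by
      rw [lpNormW, ← hN, ← hN0, Real.zero_rpow (one_div_ne_zero hp0.ne')]
    rw [this]
    exact mul_nonneg hCnn (lpNormW_nonneg hnn p f)
  rcases eq_or_lt_of_le hMnn with hM0 | hMpos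
  · -- Mf' = 0 forces f = 0, hence N = 0, contradiction
    exfalso
    have hf0 : f = fun _ => 0 := by
      funext t
      have := (Finset.sum_eq_zero_iff_of_nonneg (fun s _ =>
        mul_nonneg (nu_nonneg hnn s) (Real.rpow_nonneg (norm_nonneg _) _))).mp hM0.symm
        t (Finset.mem_univ t)
      rcases mul_eq_zero.mp this with h | h
      · exact absurd h (nu_pos hdeg t).ne'
      · have := (Real.rpow_eq_zero (norm_nonneg _) hp0.ne').mp h
        simpa using this
    have hAf0 : ∀ s, Af s = 0 := by
      intro s
      rw [hAf, hf0, markovW]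
      simp
    have : N = 0 := by
      rw [hN]
      refine Finset.sum_eq_zero fun s _ => ?_
      rw [hAf0 s, norm_zero, Real.zero_rpow hp0.ne', mul_zero]
    exact absurd this hNpos.ne'
  -- now N > 0, Mf' > 0
  set q := p / (p - 1) with hqdef
  have hq0 : (0:ℝ) < q := div_pos hp0 hp1
  set Mf := Mf' ^ (1/p) with hMfdef
  have hMfpos : 0 < Mf := Real.rpow_pos_of_pos hMpos _
  set Nq := N ^ (1/q) with hNqdef
  have hNqpos : 0 < Nq := Real.rpow_pos_of_pos hNpos _
  -- normalized functions
  set fhat := fun t => ((Mf⁻¹ : ℝ) : ℂ) * f t with hfhat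
  have hfhat1 : ∑ s, nu ω s * ‖fhat s‖ ^ p ≤ 1 := by
    have : ∀ t, ‖fhat t‖ ^ p = Mf'⁻¹ * ‖f t‖ ^ p := by
      intro t
      rw [hfhat]
      rw [norm_mul, Complex.norm_real, Real.norm_of_nonneg (inv_nonneg.mpr hMfpos.le),
        Real.mul_rpow (inv_nonneg.mpr hMfpos.le) (norm_nonneg _),
        Real.inv_rpow hMfpos.le, hMfdef, ← Real.rpow_mul hMnn,
        one_div_mul_cancel hp0.ne', Real.rpow_one]
    simp only [this]
    have h2 : ∑ x, nu ω x * (Mf'⁻¹ * ‖f x‖ ^ p) = Mf'⁻¹ * ∑ x, nu ω x * ‖f x‖ ^ p := by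
      rw [Finset.mul_sum]
      exact Finset.sum_congr rfl fun x _ => by ring
    rw [h2, ← hMf', inv_mul_cancel₀ hMpos.ne']
  set gfun := fun s => if Af s = 0 then (0:ℂ) else
    ((‖Af s‖ ^ (p-1) : ℝ) : ℂ) * ((starRingEnd ℂ) (Af s) / (‖Af s‖ : ℂ)) with hgfun
  have hgnorm : ∀ s, ‖gfun s‖ = ‖Af s‖ ^ (p-1) := by
    intro s
    simp only [hgfun]
    split_ifs with h
    · simp [h, Real.zero_rpow hp1.ne']
    · rw [norm_mul, Complex.norm_real, Real.norm_of_nonneg (Real.rpow_nonneg (norm_nonneg _) _),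
        norm_div, Complex.norm_real, Real.norm_of_nonneg (norm_nonneg _),
        RCLike.norm_conj, div_self (norm_ne_zero_iff.mpr h), mul_one]
  have hgq : ∑ s, nu ω s * ‖gfun s‖ ^ q = N := by
    rw [hN]
    refine Finset.sum_congr rfl fun s _ => ?_
    rw [hgnorm s, ← Real.rpow_mul (norm_nonneg _)]
    congr 2
    rw [hqdef]
    field_simp
  set ghat := fun s => ((Nq⁻¹ : ℝ) : ℂ) * gfun s with hghat
  have hghat1 : ∑ s, nu ω s * ‖ghat s‖ ^ q ≤ 1 := by
    have : ∀ s, ‖ghat s‖ ^ q = N⁻¹ * ‖gfun s‖ ^ q := by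
      intro s
      rw [hghat]
      rw [norm_mul, Complex.norm_real, Real.norm_of_nonneg (inv_nonneg.mpr hNqpos.le),
        Real.mul_rpow (inv_nonneg.mpr hNqpos.le) (norm_nonneg _),
        Real.inv_rpow hNqpos.le, hNqdef, ← Real.rpow_mul hNnn,
        one_div_mul_cancel hq0.ne', Real.rpow_one]
    simp only [this]
    have h2 : ∑ x, nu ω x * (N⁻¹ * ‖gfun x‖ ^ q) = N⁻¹ * ∑ x, nu ω x * ‖gfun x‖ ^ q := by
      rw [Finset.mul_sum]
      exact Finset.sum_congr rfl fun x _ => by ring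
    rw [h2, hgq, inv_mul_cancel₀ hNpos.ne']
  -- apply the three-lines estimate
  have hkey := key hsym hnn hdeg hp fhat ghat hfhat1 (by rw [← hqdef]; exact hghat1)
  -- compute the pairing
  have hTmf : ∀ s, Tm ω f s = Af s := by
    intro s
    rw [Tm, h0, sub_zero, hAf]
  have hTfhat : ∀ s, Tm ω fhat s = ((Mf⁻¹ : ℝ) : ℂ) * Af s := by
    intro s
    rw [hfhat, Tm_smul hdeg, hTmf s]
  have hpair : ∑ s, (nu ω s : ℂ) * (ghat s * Tm ω fhat s)
      = ((Nq⁻¹ * Mf⁻¹ : ℝ) : ℂ) * ((N : ℝ) : ℂ) := by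
    have hterm : ∀ s, (nu ω s : ℂ) * (ghat s * Tm ω fhat s)
        = ((Nq⁻¹ * Mf⁻¹ : ℝ) : ℂ) * ((nu ω s * ‖Af s‖ ^ p : ℝ) : ℂ) := by
      intro s
      have hgA : gfun s * Af s = ((‖Af s‖ ^ p : ℝ) : ℂ) := by
        simp only [hgfun]
        split_ifs with h
        · simp [h, Real.zero_rpow hp0.ne']
        · have hx : (0:ℝ) < ‖Af s‖ := norm_pos_iff.mpr h
          have hre : ‖Af s‖ ^ (p-1) * (‖Af s‖ ^ 2 / ‖Af s‖) = ‖Af s‖ ^ p := by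
            rw [sq, mul_div_assoc, div_self hx.ne', mul_one]
            nth_rewrite 2 [← Real.rpow_one ‖Af s‖]
            rw [← Real.rpow_add hx, sub_add_cancel]
          calc ((‖Af s‖ ^ (p-1) : ℝ) : ℂ) * ((starRingEnd ℂ) (Af s) / (‖Af s‖ : ℂ)) * Af s
              = ((‖Af s‖ ^ (p-1) : ℝ) : ℂ) * (Af s * (starRingEnd ℂ) (Af s)) / (‖Af s‖ : ℂ) := by
                ring
            _ = ((‖Af s‖ ^ (p-1) : ℝ) : ℂ) * ((Complex.normSq (Af s) : ℝ) : ℂ) /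
                  (‖Af s‖ : ℂ) := by rw [Complex.mul_conj]
            _ = ((‖Af s‖ ^ (p-1) * (‖Af s‖ ^ 2 / ‖Af s‖) : ℝ) : ℂ) := by
                rw [Complex.normSq_eq_norm_sq]
                push_cast
                ring
            _ = ((‖Af s‖ ^ p : ℝ) : ℂ) := by rw [hre]
      calc (nu ω s : ℂ) * (ghat s * Tm ω fhat s)
          = ((Nq⁻¹ : ℝ) : ℂ) * ((Mf⁻¹ : ℝ) : ℂ) * (nu ω s : ℂ) * (gfun s * Af s) := by
            rw [hghat, hTfhat s]
            ring
        _ = ((Nq⁻¹ * Mf⁻¹ : ℝ) : ℂ) * ((nu ω s * ‖Af s‖ ^ p : ℝ) : ℂ) := by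
            rw [hgA]
            push_cast
            ring
    rw [Finset.sum_congr rfl fun s _ => hterm s, ← Finset.mul_sum, ← Complex.ofReal_sum, ← hN]
  rw [hpair] at hkey
  have hnorm : ‖((Nq⁻¹ * Mf⁻¹ : ℝ) : ℂ) * ((N : ℝ) : ℂ)‖ = Nq⁻¹ * Mf⁻¹ * N := by
    rw [norm_mul, Complex.norm_real, Complex.norm_real,
      Real.norm_of_nonneg (mul_nonneg (inv_nonneg.mpr hNqpos.le) (inv_nonneg.mpr hMfpos.le)),
      Real.norm_of_nonneg hNnn]
  rw [hnorm] at hkey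
  -- conclude
  have h1q : 1 - 1/q = 1/p := by
    rw [hqdef]
    rw [one_div_div]
    field_simp
    ring
  have hNp : N ^ (1/p) = N / Nq := by
    rw [← h1q, Real.rpow_sub hNpos, Real.rpow_one, hNqdef]
  have hdiv : N / Nq = (Nq⁻¹ * Mf⁻¹ * N) * Mf := by
    field_simp
  have hfinal : N ^ (1/p) ≤ C * Mf := by
    rw [hNp, hdiv]
    exact mul_le_mul_of_nonneg_right hkey hMfpos.le
  calc lpNormW ω p Af = N ^ (1/p) := by rw [lpNormW, hN]
    _ ≤ C * Mf := hfinal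
    _ = C * lpNormW ω p f := by rw [hMfdef, lpNormW, hMf']

end Key

end Stmt10Aux

/-- `‖A_𝒢‖_{B(L^p_0(V,ν;ℂ))} ≤ 2^{1−2/p} ‖A_𝒢‖_{B(L²_0(V,ν;ℂ))}^{2/p}`
for `p ∈ [2,∞)`. -/
theorem stmt10 (p : ℝ) (hp : 2 ≤ p)
    {V : Type*} [Fintype V]
    (ω : V → V → ℝ) (hsym : SymmW ω) (hnn : NonnegW ω)
    (hdeg : ∀ s, 0 < wdeg ω s) :
    opNorm0 ω p ≤ (2 : ℝ) ^ (1 - 2 / p) * opNorm0 ω 2 ^ (2 / p) := by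
  have hp0 : (0:ℝ) < p := by linarith
  have hKnn : 0 ≤ opNorm0 ω 2 := Stmt10Aux.opNorm0_two_nonneg hsym hnn hdeg
  have hCnn : 0 ≤ (2 : ℝ) ^ (1 - 2 / p) * opNorm0 ω 2 ^ (2 / p) :=
    mul_nonneg (Real.rpow_nonneg (by norm_num) _) (Real.rpow_nonneg hKnn _)
  refine csInf_le ⟨0, fun K hK => hK.1⟩ ⟨hCnn, fun f h0 => ?_⟩
  rcases isEmpty_or_nonempty V with hV | hV
  · have h1 : lpNormW ω p (markovW ω f) = 0 := by
      rw [lpNormW, Finset.univ_eq_empty, Finset.sum_empty,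
        Real.zero_rpow (one_div_ne_zero hp0.ne')]
    have h2 : lpNormW ω p f = 0 := by
      rw [lpNormW, Finset.univ_eq_empty, Finset.sum_empty,
        Real.zero_rpow (one_div_ne_zero hp0.ne')]
    rw [h1, h2, mul_zero]
  · exact Stmt10Aux.main_ineq hsym hnn hdeg hp f h0
end
end

section
/- Let 1 < p < ∞ and C > 0, let X be a complex Banach space satisfying the p-uniform convexity inequality with constant C, and let ε ∈ [0, 1) satisfy (1+C)^{1/p}(1−ε) > 1. Let 𝒢 = (V, ω) be a connected finite weighted graph with all degrees positive that is bipartite with parts V₁, V₂ (i.e. V = V₁ ∪ V₂ disjointly and ω(s,t) = 0 whenever s, t lie in the same part). Suppose that ‖Af‖_{L^p(V,ν;X)} ≤ ε ‖f‖_{L^p(V,ν;X)} for every f : V → X with ∑_{s∈V₁} ν(s) f(s) = 0 and ∑_{s∈V₂} ν(s) f(s) = 0. Then every such f satisfies ‖f‖_{L^p(V,ν;X)} ≤ (1+C)^{−1/p}(1−ε)^{−1} ‖∇f‖_{L^p(V×V,ℙ;X)}. -/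
open scoped BigOperators
open Finset MeasureTheory

noncomputable section

variable {V : Type*}

/-- `X` satisfies the p-uniform convexity inequality with constant `C`. -/
def PUC (X : Type*) [NormedAddCommGroup X] [Module ℝ X] (p C : ℝ) : Prop :=
  ∀ (n : ℕ) (μ : Fin n → ℝ), (∀ i, 0 ≤ μ i) → (∑ i, μ i) = 1 →
    ∀ U : Fin n → X,
      ‖∑ i, μ i • U i‖ ^ p + C * ∑ i, μ i * ‖U i - ∑ j, μ j • U j‖ ^ p ≤ ∑ i, μ i * ‖U i‖ ^ p

section Helpers
private 
lemma wLp_add_le {ι : Type*} [Fintype ι] {p : ℝ} (hp : 1 ≤ p)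
    (w F G : ι → ℝ) (hw : ∀ i, 0 ≤ w i) (hF : ∀ i, 0 ≤ F i) (hG : ∀ i, 0 ≤ G i) :
    (∑ i, w i * (F i + G i) ^ p) ^ (1 / p) ≤
      (∑ i, w i * F i ^ p) ^ (1 / p) + (∑ i, w i * G i ^ p) ^ (1 / p) := by
  have hp0 : p ≠ 0 := by positivity
  have key : ∀ (H : ι → ℝ), (∀ i, 0 ≤ H i) →
      ∀ i : ι, w i * H i ^ p = |w i ^ (1 / p) * H i| ^ p := by
    intro H hH i
    rw [abs_of_nonneg (mul_nonneg (Real.rpow_nonneg (hw i) _) (hH i)),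
      Real.mul_rpow (Real.rpow_nonneg (hw i) _) (hH i),
      ← Real.rpow_mul (hw i), one_div_mul_cancel hp0, Real.rpow_one]
  have h1 := Real.Lp_add_le (Finset.univ (α := ι)) (fun i => w i ^ (1 / p) * F i)
      (fun i => w i ^ (1 / p) * G i) hp
  calc (∑ i, w i * (F i + G i) ^ p) ^ (1 / p)
      = (∑ i, |w i ^ (1/p) * F i + w i ^ (1/p) * G i| ^ p) ^ (1 / p) := by
        congr 1; refine Finset.sum_congr rfl fun i _ => ?_
        rw [← mul_add]; exact key _ (fun i => add_nonneg (hF i) (hG i)) i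
    _ ≤ (∑ i, |w i ^ (1/p) * F i| ^ p) ^ (1/p) + (∑ i, |w i ^ (1/p) * G i| ^ p) ^ (1/p) := h1
    _ = (∑ i, w i * F i ^ p) ^ (1 / p) + (∑ i, w i * G i ^ p) ^ (1 / p) := by
        congr 1 <;> (congr 1; refine Finset.sum_congr rfl fun i _ => ?_)
        · exact (key F hF i).symm
        · exact (key G hG i).symm

private lemma wLp_norm_le {ι X : Type*} [Fintype ι] [NormedAddCommGroup X] {p : ℝ} (hp : 1 ≤ p)
    (w : ι → ℝ) (hw : ∀ i, 0 ≤ w i) (a b : ι → X) :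
    (∑ i, w i * ‖a i‖ ^ p) ^ (1 / p) ≤
      (∑ i, w i * ‖a i - b i‖ ^ p) ^ (1 / p) + (∑ i, w i * ‖b i‖ ^ p) ^ (1 / p) := by
  have h1 : (∑ i, w i * ‖a i‖ ^ p) ≤ ∑ i, w i * (‖a i - b i‖ + ‖b i‖) ^ p := by
    refine Finset.sum_le_sum fun i _ => mul_le_mul_of_nonneg_left ?_ (hw i)
    refine Real.rpow_le_rpow (norm_nonneg _) ?_ (le_trans zero_le_one hp)
    calc ‖a i‖ = ‖(a i - b i) + b i‖ := by rw [sub_add_cancel]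
    _ ≤ ‖a i - b i‖ + ‖b i‖ := norm_add_le _ _
  refine le_trans (Real.rpow_le_rpow (Finset.sum_nonneg fun i _ =>
    mul_nonneg (hw i) (Real.rpow_nonneg (norm_nonneg _) _)) h1 (by positivity)) ?_
  exact wLp_add_le hp w _ _ hw (fun i => by positivity) (fun i => norm_nonneg _)

end Helpers

/-- bipartite variant. If `𝒢` is bipartite with parts `V₁, V₁ᶜ` and
`‖Af‖_p ≤ ε‖f‖_p` for all `f` with zero mean on each part, then every such `f` satisfies
`‖f‖_p ≤ (1+C)^{−1/p}(1−ε)^{−1} ‖∇f‖_p`. -/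
theorem stmt11 (p C : ℝ) (hp : 1 < p) (hC : 0 < C)
    (X : Type*) [NormedAddCommGroup X] [NormedSpace ℂ X] [CompleteSpace X]
    (hX : PUC X p C)
    (ε : ℝ) (hε0 : 0 ≤ ε) (hε1 : ε < 1)
    (hcond : 1 < (1 + C) ^ (1 / p) * (1 - ε))
    {V : Type*} [Fintype V] [DecidableEq V]
    (ω : V → V → ℝ) (hsym : SymmW ω) (hnn : NonnegW ω) (hconn : ConnW ω)
    (hdeg : ∀ s, 0 < wdeg ω s)
    (V₁ : Finset V)
    (hbip : ∀ s t, 0 < ω s t → ((s ∈ V₁ ∧ t ∉ V₁) ∨ (s ∉ V₁ ∧ t ∈ V₁)))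
    (hA : ∀ f : V → X, (∑ s ∈ V₁, nu ω s • f s) = 0 → (∑ s ∈ V₁ᶜ, nu ω s • f s) = 0 →
      lpNormW ω p (markovW ω f) ≤ ε * lpNormW ω p f) :
    ∀ f : V → X, (∑ s ∈ V₁, nu ω s • f s) = 0 → (∑ s ∈ V₁ᶜ, nu ω s • f s) = 0 →
      lpNormW ω p f ≤ (1 + C) ^ (-(1 / p)) * (1 - ε)⁻¹ * gradNormW ω p f := by
  intro f hf1 hf2
  haveI : Nonempty V := hconn.nonempty
  have hp0 : (0:ℝ) < p := lt_trans one_pos hp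
  have hp0' : p ≠ 0 := ne_of_gt hp0
  have hp1 : (1:ℝ) ≤ p := le_of_lt hp
  have hWpos : 0 < ∑ t, wdeg ω t := Finset.sum_pos (fun s _ => hdeg s) univ_nonempty
  set W : ℝ := ∑ t, wdeg ω t with hWdef
  have hWW : ∑ u, ∑ v, ω u v = W := rfl
  have hnu : ∀ s, nu ω s = wdeg ω s / W := fun s => rfl
  have hnu0 : ∀ s, 0 ≤ nu ω s := fun s => div_nonneg (hdeg s).le hWpos.le
  have hP : ∀ s t, edgeP ω s t = nu ω s * (ω s t / wdeg ω s) := by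
    intro s t
    have hW0 : W ≠ 0 := hWpos.ne'
    have hd0 : wdeg ω s ≠ 0 := (hdeg s).ne'
    rw [edgeP, hWW, hnu]
    field_simp
  have hP0 : ∀ s t, 0 ≤ edgeP ω s t := fun s t => div_nonneg (hnn s t) hWpos.le
  have hrow : ∀ s, ∑ t, edgeP ω s t = nu ω s := by
    intro s
    simp only [edgeP, hWW, hnu]
    rw [← Finset.sum_div]
    rfl
  have hcol : ∀ t, ∑ s, edgeP ω s t = nu ω t := by
    intro t
    rw [← hrow t]
    exact Finset.sum_congr rfl fun s _ => by rw [edgeP, edgeP, hsym s t]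
  have hAf : ∀ s, markovW ω f s = ∑ t, (ω s t / wdeg ω s) • f t := by
    intro s
    rw [markovW, Finset.smul_sum]
    exact Finset.sum_congr rfl fun t _ => by rw [smul_smul, div_eq_inv_mul]
  -- Step 1: pointwise p-uniform convexity
  have step1 : ∀ s, ‖markovW ω f s - f s‖ ^ p
      + C * ∑ t, (ω s t / wdeg ω s) * ‖markovW ω f s - f t‖ ^ p
      ≤ ∑ t, (ω s t / wdeg ω s) * ‖f t - f s‖ ^ p := by
    intro s
    set e : Fin (Fintype.card V) ≃ V := (Fintype.equivFin V).symm with he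
    have hμ0 : ∀ i, 0 ≤ ω s (e i) / wdeg ω s := fun i => div_nonneg (hnn _ _) (hdeg s).le
    have hμ1 : ∑ i, ω s (e i) / wdeg ω s = 1 := by
      rw [Equiv.sum_comp e (fun t => ω s t / wdeg ω s), ← Finset.sum_div]
      exact div_self (hdeg s).ne'
    have hEU : (∑ i, (ω s (e i) / wdeg ω s) • (f s - f (e i))) = f s - markovW ω f s := by
      have : (∑ i, (ω s (e i) / wdeg ω s) • (f s - f (e i)))
          = (∑ i, (ω s (e i) / wdeg ω s)) • f s - ∑ i, (ω s (e i) / wdeg ω s) • f (e i) := by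
        rw [Finset.sum_smul, ← Finset.sum_sub_distrib]
        exact Finset.sum_congr rfl fun i _ => smul_sub _ _ _
      rw [this, hμ1, one_smul, hAf, Equiv.sum_comp e (fun t => (ω s t / wdeg ω s) • f t)]
    have key := hX (Fintype.card V) (fun i => ω s (e i) / wdeg ω s) hμ0 hμ1
      (fun i => f s - f (e i))
    simp only [hEU] at key
    have e1 : ‖f s - markovW ω f s‖ = ‖markovW ω f s - f s‖ := norm_sub_rev _ _
    rw [e1] at key
    refine le_trans (le_of_eq ?_) (le_trans key (le_of_eq ?_))
    · congr 1
      congr 1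
      rw [← Equiv.sum_comp e (fun t => (ω s t / wdeg ω s) * ‖markovW ω f s - f t‖ ^ p)]
      refine Finset.sum_congr rfl fun i _ => ?_
      congr 2
      rw [sub_sub_sub_cancel_left, norm_sub_rev]
    · rw [← Equiv.sum_comp e (fun t => (ω s t / wdeg ω s) * ‖f t - f s‖ ^ p)]
      refine Finset.sum_congr rfl fun i _ => ?_
      rw [norm_sub_rev]
  -- notation
  set A1 : ℝ := ∑ s, nu ω s * ‖markovW ω f s - f s‖ ^ p with hA1
  set A2 : ℝ := ∑ s, ∑ t, edgeP ω s t * ‖markovW ω f s - f t‖ ^ p with hA2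
  set Gp : ℝ := ∑ s, ∑ t, edgeP ω s t * ‖f t - f s‖ ^ p with hGp
  have hA1nn : 0 ≤ A1 := Finset.sum_nonneg fun s _ =>
    mul_nonneg (hnu0 s) (Real.rpow_nonneg (norm_nonneg _) _)
  have hA2nn : 0 ≤ A2 := Finset.sum_nonneg fun s _ => Finset.sum_nonneg fun t _ =>
    mul_nonneg (hP0 s t) (Real.rpow_nonneg (norm_nonneg _) _)
  have hGpnn : 0 ≤ Gp := Finset.sum_nonneg fun s _ => Finset.sum_nonneg fun t _ =>
    mul_nonneg (hP0 s t) (Real.rpow_nonneg (norm_nonneg _) _)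
  -- Step 2: sum the pointwise inequality against ν
  have step2 : A1 + C * A2 ≤ Gp := by
    have h := Finset.sum_le_sum (fun s (_ : s ∈ (univ : Finset V)) =>
      mul_le_mul_of_nonneg_left (step1 s) (hnu0 s))
    have lhs_eq : ∑ s, nu ω s * (‖markovW ω f s - f s‖ ^ p
        + C * ∑ t, (ω s t / wdeg ω s) * ‖markovW ω f s - f t‖ ^ p) = A1 + C * A2 := by
      rw [hA1, hA2, Finset.mul_sum, ← Finset.sum_add_distrib]
      refine Finset.sum_congr rfl fun s _ => ?_
      rw [mul_add]
      congr 1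
      rw [Finset.mul_sum, Finset.mul_sum, Finset.mul_sum]
      refine Finset.sum_congr rfl fun t _ => ?_
      rw [hP]; ring
    have rhs_eq : ∑ s, nu ω s * ∑ t, (ω s t / wdeg ω s) * ‖f t - f s‖ ^ p = Gp := by
      refine Finset.sum_congr rfl fun s _ => ?_
      rw [Finset.mul_sum]
      refine Finset.sum_congr rfl fun t _ => ?_
      rw [hP]; ring
    rw [lhs_eq, rhs_eq] at h
    exact h
  -- L and M
  set L : ℝ := lpNormW ω p f with hL
  set M : ℝ := lpNormW ω p (markovW ω f) with hM
  have hLnn : 0 ≤ L := Real.rpow_nonneg (Finset.sum_nonneg fun s _ =>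
    mul_nonneg (hnu0 s) (Real.rpow_nonneg (norm_nonneg _) _)) _
  have hMε : M ≤ ε * L := hA f hf1 hf2
  -- Step 3: L ≤ A1^(1/p) + M
  have step3 : L ≤ A1 ^ (1/p) + M := by
    have h := wLp_norm_le hp1 (nu ω) hnu0 f (markovW ω f)
    refine le_trans h (le_of_eq ?_)
    congr 2
    refine Finset.sum_congr rfl fun s _ => ?_
    rw [norm_sub_rev]
  -- Step 4: L ≤ A2^(1/p) + M
  have step4 : L ≤ A2 ^ (1/p) + M := by
    have h := wLp_norm_le hp1 (fun q : V × V => edgeP ω q.1 q.2)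
      (fun q => hP0 q.1 q.2) (fun q => f q.2) (fun q => markovW ω f q.1)
    have e1 : ∑ q : V × V, edgeP ω q.1 q.2 * ‖f q.2‖ ^ p = ∑ s, nu ω s * ‖f s‖ ^ p := by
      rw [Fintype.sum_prod_type, Finset.sum_comm]
      refine Finset.sum_congr rfl fun t _ => ?_
      show ∑ s, edgeP ω s t * ‖f t‖ ^ p = _
      rw [← Finset.sum_mul, hcol]
    have e2 : ∑ q : V × V, edgeP ω q.1 q.2 * ‖f q.2 - markovW ω f q.1‖ ^ p = A2 := by
      rw [Fintype.sum_prod_type, hA2]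
      refine Finset.sum_congr rfl fun s _ => Finset.sum_congr rfl fun t _ => ?_
      rw [norm_sub_rev]
    have e3 : ∑ q : V × V, edgeP ω q.1 q.2 * ‖markovW ω f q.1‖ ^ p
        = ∑ s, nu ω s * ‖markovW ω f s‖ ^ p := by
      rw [Fintype.sum_prod_type]
      refine Finset.sum_congr rfl fun s _ => ?_
      show ∑ t, edgeP ω s t * ‖markovW ω f s‖ ^ p = _
      rw [← Finset.sum_mul, hrow]
    rw [e1, e2, e3] at h
    exact h
  -- combine
  have hεL : 0 ≤ (1 - ε) * L := mul_nonneg (by linarith) hLnn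
  have hpow : ∀ B : ℝ, 0 ≤ B → (1 - ε) * L ≤ B ^ (1/p) → ((1 - ε) * L) ^ p ≤ B := by
    intro B hB hle
    have := Real.rpow_le_rpow hεL hle hp0.le
    rwa [← Real.rpow_mul hB, one_div_mul_cancel hp0', Real.rpow_one] at this
  have hB1 : ((1 - ε) * L) ^ p ≤ A1 := hpow A1 hA1nn (by nlinarith [step3, hMε])
  have hB2 : ((1 - ε) * L) ^ p ≤ A2 := hpow A2 hA2nn (by nlinarith [step4, hMε])
  have hGbig : (1 + C) * ((1 - ε) * L) ^ p ≤ Gp := by nlinarith [step2]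
  have hfinal : (1 + C) ^ (1/p) * ((1 - ε) * L) ≤ Gp ^ (1/p) := by
    have h := Real.rpow_le_rpow (by positivity) hGbig (by positivity : (0:ℝ) ≤ 1/p)
    rwa [Real.mul_rpow (by linarith : (0:ℝ) ≤ 1 + C) (Real.rpow_nonneg hεL _),
      ← Real.rpow_mul hεL, mul_one_div_cancel hp0', Real.rpow_one] at h
  have hk : 0 < (1 + C) ^ (1/p) := Real.rpow_pos_of_pos (by linarith) _
  have hε' : 0 < 1 - ε := by linarith
  have : gradNormW ω p f = Gp ^ (1/p) := rfl
  rw [this, Real.rpow_neg (by linarith : (0:ℝ) ≤ 1 + C)]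
  calc L = ((1 + C) ^ (1/p))⁻¹ * (1 - ε)⁻¹ * ((1 + C) ^ (1/p) * ((1 - ε) * L)) := by
        field_simp
    _ ≤ ((1 + C) ^ (1/p))⁻¹ * (1 - ε)⁻¹ * Gp ^ (1/p) := by
        refine mul_le_mul_of_nonneg_left hfinal (by positivity)
end
end

section
/- Let η ∈ (0, 100) and let c ∈ (0, 1) satisfy (1+η)(1 − c + c·log c) > 1 + η/2. Then there exists m₀ such that for all integers m ≥ m₀ and all ρ ∈ (0, 1) with (1+η) log m ≤ m ρ ≤ 101 log m, a binomial random variable B(m−1, ρ) with m−1 trials and success probability ρ satisfies ℙ( B(m−1, ρ) ≤ c m ρ ) ≤ 2 m^{−(1+η/2)}. -/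
open scoped BigOperators
open Finset

/-- lower-tail estimate for the binomial distribution. If `η ∈ (0,100)` and
`c ∈ (0,1)` satisfy `(1+η)(1 − c + c log c) > 1 + η/2`, then there is `m₀` such that for all
`m ≥ m₀` and `ρ ∈ (0,1)` with `(1+η) log m ≤ mρ ≤ 101 log m`,
`ℙ(B(m−1,ρ) ≤ cmρ) ≤ 2 m^{−(1+η/2)}`. -/
theorem stmt13 (η c : ℝ) (hη0 : 0 < η) (hη1 : η < 100) (hc0 : 0 < c) (hc1 : c < 1)
    (hcond : 1 + η / 2 < (1 + η) * (1 - c + c * Real.log c)) :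
    ∃ m₀ : ℕ, ∀ m : ℕ, m₀ ≤ m → ∀ ρ : ℝ, 0 < ρ → ρ < 1 →
      (1 + η) * Real.log m ≤ m * ρ → (m : ℝ) * ρ ≤ 101 * Real.log m →
      (∑ k ∈ Finset.range m, if (k : ℝ) ≤ c * m * ρ then
          ((m - 1).choose k : ℝ) * ρ ^ k * (1 - ρ) ^ (m - 1 - k) else 0)
        ≤ 2 * (m : ℝ) ^ (-(1 + η / 2)) := by
  set A := 1 - c + c * Real.log c with hAdef
  have hApos : 0 < A := by
    by_contra h
    push_neg at h
    nlinarith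
  set δ := (1 + η) * A - (1 + η / 2) with hδdef
  have hδpos : 0 < δ := by rw [hδdef]; linarith
  refine ⟨⌈Real.exp (1/δ)⌉₊ + 2, fun m hm ρ hρ0 hρ1 hlow hhigh => ?_⟩
  have hm2 : 2 ≤ m := le_trans (by omega) hm
  have hmR : (2:ℝ) ≤ (m:ℝ) := by exact_mod_cast hm2
  have hm0 : (0:ℝ) < m := by linarith
  have hceilN : ⌈Real.exp (1/δ)⌉₊ ≤ m := by omega
  have hceil : (⌈Real.exp (1/δ)⌉₊ : ℝ) ≤ (m:ℝ) := by exact_mod_cast hceilN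
  have hexpm : Real.exp (1/δ) ≤ (m:ℝ) := le_trans (Nat.le_ceil _) hceil
  have hlogδ : 1/δ ≤ Real.log m := by
    calc 1/δ = Real.log (Real.exp (1/δ)) := (Real.log_exp _).symm
    _ ≤ Real.log m := Real.log_le_log (Real.exp_pos _) hexpm
  have hlogpos : 0 < Real.log m :=
    lt_of_lt_of_le (by positivity) hlogδ
  set n := m - 1 with hn
  have hnm : n + 1 = m := by omega
  have hncast : (n:ℝ) = (m:ℝ) - 1 := by
    rw [hn, Nat.cast_sub (by omega)]; norm_num
  set R := (c:ℝ) ^ (-(c * (m:ℝ) * ρ)) with hRdef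
  have hRpos : 0 < R := Real.rpow_pos_of_pos hc0 _
  -- step 1: termwise bound
  have key : ∀ k ∈ Finset.range m,
      (if (k : ℝ) ≤ c * (m:ℝ) * ρ then
          ((n.choose k : ℝ)) * ρ ^ k * (1 - ρ) ^ (n - k) else 0)
        ≤ R * ((n.choose k : ℝ) * (c * ρ) ^ k * (1 - ρ) ^ (n - k)) := by
    intro k hk
    have h1ρ : (0:ℝ) ≤ 1 - ρ := by linarith
    have hterm : (0:ℝ) ≤ (n.choose k : ℝ) * ρ ^ k * (1 - ρ) ^ (n - k) := by positivity
    split_ifs with hkle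
    · have hone : 1 ≤ R * c ^ k := by
        have : R * c ^ k = (c:ℝ) ^ ((k:ℝ) - c * (m:ℝ) * ρ) := by
          rw [hRdef, ← Real.rpow_natCast c k, ← Real.rpow_add hc0]
          ring_nf
        rw [this]
        exact Real.one_le_rpow_of_pos_of_le_one_of_nonpos hc0 hc1.le (by linarith)
      calc (n.choose k : ℝ) * ρ ^ k * (1 - ρ) ^ (n - k)
          ≤ (R * c ^ k) * ((n.choose k : ℝ) * ρ ^ k * (1 - ρ) ^ (n - k)) :=
            le_mul_of_one_le_left hterm hone
        _ = R * ((n.choose k : ℝ) * (c * ρ) ^ k * (1 - ρ) ^ (n - k)) := by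
            rw [mul_pow]; ring
    · positivity
  have step1 : (∑ k ∈ Finset.range m, if (k : ℝ) ≤ c * (m:ℝ) * ρ then
          ((n.choose k : ℝ)) * ρ ^ k * (1 - ρ) ^ (n - k) else 0)
        ≤ R * (c * ρ + (1 - ρ)) ^ n := by
    calc (∑ k ∈ Finset.range m, if (k : ℝ) ≤ c * (m:ℝ) * ρ then
          ((n.choose k : ℝ)) * ρ ^ k * (1 - ρ) ^ (n - k) else 0)
        ≤ ∑ k ∈ Finset.range m, R * ((n.choose k : ℝ) * (c * ρ) ^ k * (1 - ρ) ^ (n - k)) :=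
          Finset.sum_le_sum key
      _ = R * ∑ k ∈ Finset.range (n + 1),
            (c * ρ) ^ k * (1 - ρ) ^ (n - k) * (n.choose k : ℝ) := by
          rw [hnm, ← Finset.mul_sum]
          congr 1
          exact Finset.sum_congr rfl fun k _ => by ring
      _ = R * (c * ρ + (1 - ρ)) ^ n := by rw [← add_pow]
  -- step 2: exponential bound
  have hbase : c * ρ + (1 - ρ) ≤ Real.exp (-((1 - c) * ρ)) := by
    have := Real.add_one_le_exp (-((1 - c) * ρ))
    linarith
  have hbase0 : (0:ℝ) ≤ c * ρ + (1 - ρ) := by nlinarith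
  have step2 : (c * ρ + (1 - ρ)) ^ n ≤ Real.exp ((n:ℝ) * (-((1 - c) * ρ))) := by
    calc (c * ρ + (1 - ρ)) ^ n ≤ (Real.exp (-((1 - c) * ρ))) ^ n :=
          pow_le_pow_left₀ hbase0 hbase n
      _ = Real.exp ((n:ℝ) * (-((1 - c) * ρ))) := by
          rw [← Real.exp_nat_mul]
  have hRexp : R = Real.exp (Real.log c * (-(c * (m:ℝ) * ρ))) :=
    Real.rpow_def_of_pos hc0 _
  have step3 : (∑ k ∈ Finset.range m, if (k : ℝ) ≤ c * (m:ℝ) * ρ then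
          ((n.choose k : ℝ)) * ρ ^ k * (1 - ρ) ^ (n - k) else 0)
        ≤ Real.exp (-((m:ℝ) * ρ) * A + ρ * (1 - c)) := by
    calc _ ≤ R * (c * ρ + (1 - ρ)) ^ n := step1
      _ ≤ R * Real.exp ((n:ℝ) * (-((1 - c) * ρ))) := by
          exact mul_le_mul_of_nonneg_left step2 hRpos.le
      _ = Real.exp (Real.log c * (-(c * (m:ℝ) * ρ)) + (n:ℝ) * (-((1 - c) * ρ))) := by
          rw [hRexp, ← Real.exp_add]
      _ = Real.exp (-((m:ℝ) * ρ) * A + ρ * (1 - c)) := by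
          congr 1
          rw [hncast, hAdef]; ring
  -- step 4: exponent estimate
  have hmul : (1 + η) * Real.log m * A ≤ (m:ℝ) * ρ * A :=
    mul_le_mul_of_nonneg_right hlow hApos.le
  have hEbound : -((m:ℝ) * ρ) * A + ρ * (1 - c) ≤
      1 - δ * Real.log m + (-(1 + η / 2) * Real.log m) := by
    have hρc : ρ * (1 - c) ≤ 1 := by nlinarith
    have : (δ + (1 + η / 2)) * Real.log m ≤ (m:ℝ) * ρ * A := by
      rw [hδdef]
      calc ((1 + η) * A - (1 + η / 2) + (1 + η / 2)) * Real.log m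
          = (1 + η) * Real.log m * A := by ring
        _ ≤ (m:ℝ) * ρ * A := hmul
    linarith [this, hρc]
  have hδlog : 1 ≤ δ * Real.log m := by
    calc (1:ℝ) = δ * (1/δ) := by field_simp
      _ ≤ δ * Real.log m := mul_le_mul_of_nonneg_left hlogδ hδpos.le
  -- finish
  calc (∑ k ∈ Finset.range m, if (k : ℝ) ≤ c * (m:ℝ) * ρ then
          ((n.choose k : ℝ)) * ρ ^ k * (1 - ρ) ^ (n - k) else 0)
      ≤ Real.exp (-((m:ℝ) * ρ) * A + ρ * (1 - c)) := step3
    _ ≤ Real.exp (1 - δ * Real.log m + (-(1 + η / 2) * Real.log m)) :=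
        Real.exp_le_exp.mpr hEbound
    _ = Real.exp (1 - δ * Real.log m) * Real.exp (Real.log m * (-(1 + η / 2))) := by
        rw [← Real.exp_add]; congr 1; ring
    _ ≤ 2 * (m : ℝ) ^ (-(1 + η / 2)) := by
        have h1 : Real.exp (1 - δ * Real.log m) ≤ 2 := by
          calc Real.exp (1 - δ * Real.log m) ≤ Real.exp 0 :=
                Real.exp_le_exp.mpr (by linarith)
            _ = 1 := Real.exp_zero
            _ ≤ 2 := one_le_two
        have h2 : Real.exp (Real.log m * (-(1 + η / 2))) = (m:ℝ) ^ (-(1 + η / 2)) :=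
          (Real.rpow_def_of_pos hm0 _).symm
        rw [h2]
        exact mul_le_mul_of_nonneg_right h1 (Real.rpow_pos_of_pos hm0 _).le
end

section
/- Let V be a finite set with n = |V| ≥ 1, and let ω₁, ω₂ : V×V → ℝ≥0 be symmetric weight functions with all degrees positive: d_{ω₁}(s) > 0 and d_{ω₂}(s) > 0 for all s. Let D_i = ∑_{s∈V} d_{ω_i}(s) and δ = ∑_{s∈V} ( |d_{ω₁}(s) − D₁/n| / D₁ + |d_{ω₂}(s) − D₂/n| / D₂ ). Then ‖A⁰_{ω₁+ω₂}‖ ≤ δ + (1−δ) · max( ‖A⁰_{ω₁}‖, ‖A⁰_{ω₂}‖ ). -/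
open scoped BigOperators
open Finset MeasureTheory

noncomputable section

variable {V : Type*}

/-- The norm of `L²(V, d_ω)` (weighted by the degrees). -/
def l2d [Fintype V] (ω : V → V → ℝ) (f : V → ℂ) : ℝ :=
  Real.sqrt (∑ s, wdeg ω s * ‖f s‖ ^ 2)

/-- `‖A⁰_ω‖`: operator norm of the Markov operator restricted to the orthogonal complement of
the constants in `L²(V, d_ω)`. -/
def opA0 [Fintype V] (ω : V → V → ℝ) : ℝ :=
  sInf {K : ℝ | 0 ≤ K ∧ ∀ f : V → ℂ, (∑ s, (wdeg ω s : ℂ) * f s) = 0 →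
    l2d ω (markovW ω f) ≤ K * l2d ω f}

section Aux
variable [Fintype V]

/-- Cauchy–Schwarz: nonnegative coefficients. -/
lemma cs_nonneg (a : V → ℝ) (ha : ∀ s, 0 ≤ a s) (g : V → ℂ) :
    ‖∑ s, (a s : ℂ) * g s‖ ^ 2 ≤ (∑ s, a s) * ∑ s, a s * ‖g s‖ ^ 2 := by
  have h1 : ‖∑ s, (a s : ℂ) * g s‖ ≤ ∑ s, a s * ‖g s‖ := by
    refine (norm_sum_le _ _).trans (le_of_eq (Finset.sum_congr rfl fun s _ => ?_))
    rw [norm_mul, Complex.norm_real, Real.norm_eq_abs, abs_of_nonneg (ha s)]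
  have h2 : (∑ s, a s * ‖g s‖) ^ 2 ≤ (∑ s, a s) * ∑ s, a s * ‖g s‖ ^ 2 := by
    have := Finset.sum_mul_sq_le_sq_mul_sq Finset.univ
      (fun s => Real.sqrt (a s)) (fun s => Real.sqrt (a s) * ‖g s‖)
    calc (∑ s, a s * ‖g s‖) ^ 2
        = (∑ s, Real.sqrt (a s) * (Real.sqrt (a s) * ‖g s‖)) ^ 2 := by
          congr 1; refine Finset.sum_congr rfl fun s _ => ?_
          rw [← mul_assoc, Real.mul_self_sqrt (ha s)]
      _ ≤ (∑ s, Real.sqrt (a s) ^ 2) * ∑ s, (Real.sqrt (a s) * ‖g s‖) ^ 2 := this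
      _ = (∑ s, a s) * ∑ s, a s * ‖g s‖ ^ 2 := by
          congr 1
          · exact Finset.sum_congr rfl fun s _ => Real.sq_sqrt (ha s)
          · refine Finset.sum_congr rfl fun s _ => ?_
            rw [mul_pow, Real.sq_sqrt (ha s)]
  exact (pow_le_pow_left₀ (norm_nonneg _) h1 2).trans h2

/-- Cauchy–Schwarz: arbitrary real coefficients vs a positive weight. -/
lemma cs_weighted (k d : V → ℝ) (hd : ∀ s, 0 < d s) (f : V → ℂ) :
    ‖∑ s, (k s : ℂ) * f s‖ ^ 2 ≤ (∑ s, k s ^ 2 / d s) * ∑ s, d s * ‖f s‖ ^ 2 := by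
  have h1 : ‖∑ s, (k s : ℂ) * f s‖ ≤ ∑ s, |k s| * ‖f s‖ := by
    refine (norm_sum_le _ _).trans (le_of_eq (Finset.sum_congr rfl fun s _ => ?_))
    rw [norm_mul, Complex.norm_real, Real.norm_eq_abs]
  have h2 : (∑ s, |k s| * ‖f s‖) ^ 2 ≤ (∑ s, k s ^ 2 / d s) * ∑ s, d s * ‖f s‖ ^ 2 := by
    have := Finset.sum_mul_sq_le_sq_mul_sq Finset.univ
      (fun s => |k s| / Real.sqrt (d s)) (fun s => Real.sqrt (d s) * ‖f s‖)
    calc (∑ s, |k s| * ‖f s‖) ^ 2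
        = (∑ s, |k s| / Real.sqrt (d s) * (Real.sqrt (d s) * ‖f s‖)) ^ 2 := by
          congr 1; refine Finset.sum_congr rfl fun s _ => ?_
          have : Real.sqrt (d s) ≠ 0 := ne_of_gt (Real.sqrt_pos.mpr (hd s))
          field_simp
      _ ≤ (∑ s, (|k s| / Real.sqrt (d s)) ^ 2) * ∑ s, (Real.sqrt (d s) * ‖f s‖) ^ 2 := this
      _ = (∑ s, k s ^ 2 / d s) * ∑ s, d s * ‖f s‖ ^ 2 := by
          congr 1
          · refine Finset.sum_congr rfl fun s _ => ?_
            rw [div_pow, sq_abs, Real.sq_sqrt (hd s).le]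
          · refine Finset.sum_congr rfl fun s _ => ?_
            rw [mul_pow, Real.sq_sqrt (hd s).le]
  exact (pow_le_pow_left₀ (norm_nonneg _) h1 2).trans h2

lemma markov_bound (ω : V → V → ℝ) (hs : SymmW ω) (hn : NonnegW ω)
    (hd : ∀ s, 0 < wdeg ω s) (f : V → ℂ) :
    l2d ω (markovW ω f) ≤ l2d ω f := by
  unfold l2d
  apply Real.sqrt_le_sqrt
  calc ∑ s, wdeg ω s * ‖markovW ω f s‖ ^ 2
      ≤ ∑ s, ∑ t, ω s t * ‖f t‖ ^ 2 := by
        refine Finset.sum_le_sum fun s _ => ?_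
        have hds := hd s
        have hmv : markovW ω f s = (wdeg ω s)⁻¹ • ∑ t, (ω s t : ℂ) * f t := by
          unfold markovW
          simp only [Complex.real_smul]
        have hnorm : ‖markovW ω f s‖ ^ 2
            = (wdeg ω s)⁻¹ ^ 2 * ‖∑ t, (ω s t : ℂ) * f t‖ ^ 2 := by
          rw [hmv, norm_smul, Real.norm_eq_abs, abs_of_nonneg (inv_nonneg.mpr hds.le), mul_pow]
        have hcs := cs_nonneg (fun t => ω s t) (hn s) f
        rw [hnorm]
        have hwd : (∑ t, ω s t) = wdeg ω s := rfl
        rw [hwd] at hcs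
        calc wdeg ω s * ((wdeg ω s)⁻¹ ^ 2 * ‖∑ t, (ω s t : ℂ) * f t‖ ^ 2)
            ≤ wdeg ω s * ((wdeg ω s)⁻¹ ^ 2 * (wdeg ω s * ∑ t, ω s t * ‖f t‖ ^ 2)) := by
              apply mul_le_mul_of_nonneg_left _ hds.le
              apply mul_le_mul_of_nonneg_left hcs (by positivity)
          _ = ∑ t, ω s t * ‖f t‖ ^ 2 := by
              field_simp
    _ = ∑ t, wdeg ω t * ‖f t‖ ^ 2 := by
        rw [Finset.sum_comm]
        refine Finset.sum_congr rfl fun t _ => ?_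
        rw [← Finset.sum_mul]
        congr 1
        unfold wdeg
        exact Finset.sum_congr rfl fun s _ => hs s t

lemma one_mem_opA0_set (ω : V → V → ℝ) (hs : SymmW ω) (hn : NonnegW ω)
    (hd : ∀ s, 0 < wdeg ω s) :
    (1 : ℝ) ∈ {K : ℝ | 0 ≤ K ∧ ∀ f : V → ℂ, (∑ s, (wdeg ω s : ℂ) * f s) = 0 →
      l2d ω (markovW ω f) ≤ K * l2d ω f} :=
  ⟨zero_le_one, fun f _ => by simpa using markov_bound ω hs hn hd f⟩

lemma opA0_nonneg (ω : V → V → ℝ) (hs : SymmW ω) (hn : NonnegW ω)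
    (hd : ∀ s, 0 < wdeg ω s) : 0 ≤ opA0 ω :=
  le_csInf ⟨1, one_mem_opA0_set ω hs hn hd⟩ fun _ hK => hK.1

lemma opA0_le_one (ω : V → V → ℝ) (hs : SymmW ω) (hn : NonnegW ω)
    (hd : ∀ s, 0 < wdeg ω s) : opA0 ω ≤ 1 :=
  csInf_le ⟨0, fun _ hK => hK.1⟩ (one_mem_opA0_set ω hs hn hd)

lemma opA0_spec (ω : V → V → ℝ) (hs : SymmW ω) (hn : NonnegW ω)
    (hd : ∀ s, 0 < wdeg ω s) (f : V → ℂ)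
    (hf : (∑ s, (wdeg ω s : ℂ) * f s) = 0) :
    l2d ω (markovW ω f) ≤ opA0 ω * l2d ω f := by
  have hL : (0:ℝ) ≤ l2d ω f := Real.sqrt_nonneg _
  rcases eq_or_lt_of_le hL with h | h
  · have h1 := (one_mem_opA0_set ω hs hn hd).2 f hf
    rw [← h] at h1 ⊢
    simpa using h1
  · rw [← div_le_iff₀ h]
    refine le_csInf ⟨1, one_mem_opA0_set ω hs hn hd⟩ fun K hK => ?_
    rw [div_le_iff₀ h]
    exact hK.2 f hf

end Aux
section Aux2
variable [Fintype V]

def qf2 (ω : V → V → ℝ) (f g : V → ℂ) : ℝ :=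
  ∑ s, ∑ t, ω s t * (f t * (starRingEnd ℂ) (g s)).re

lemma re_real_mul (r : ℝ) (z : ℂ) : ((r : ℂ) * z).re = r * z.re := by
  simp [Complex.mul_re]

lemma csq (z : ℂ) : ‖z‖ ^ 2 = z.re ^ 2 + z.im ^ 2 := by
  rw [Complex.sq_norm, Complex.normSq_apply]; ring

lemma re_mul_conj_comm (a b : ℂ) : (a * (starRingEnd ℂ) b).re = (b * (starRingEnd ℂ) a).re := by
  simp [Complex.mul_re, Complex.conj_re, Complex.conj_im]; ring

lemma mul_conj_self_re (a : ℂ) : (a * (starRingEnd ℂ) a).re = ‖a‖ ^ 2 := by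
  rw [Complex.mul_conj, Complex.ofReal_re, Complex.normSq_eq_norm_sq]

lemma markov_pair (ω : V → V → ℝ) (hd : ∀ s, 0 < wdeg ω s) (x y : V → ℂ) :
    ∑ s, wdeg ω s * (markovW ω x s * (starRingEnd ℂ) (y s)).re = qf2 ω x y := by
  unfold qf2
  refine Finset.sum_congr rfl fun s _ => ?_
  have hds : wdeg ω s ≠ 0 := (hd s).ne'
  unfold markovW
  rw [smul_mul_assoc, Complex.smul_re, smul_eq_mul, ← mul_assoc,
    mul_inv_cancel₀ hds, one_mul, Finset.sum_mul, Complex.re_sum]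
  exact Finset.sum_congr rfl fun t _ => by
    rw [smul_mul_assoc, Complex.smul_re, smul_eq_mul]

lemma mean_markov (ω : V → V → ℝ) (hs : SymmW ω) (hd : ∀ s, 0 < wdeg ω s) (x : V → ℂ) :
    ∑ s, (wdeg ω s : ℂ) * markovW ω x s = ∑ t, (wdeg ω t : ℂ) * x t := by
  calc ∑ s, (wdeg ω s : ℂ) * markovW ω x s = ∑ s, ∑ t, (ω s t : ℂ) * x t := by
        refine Finset.sum_congr rfl fun s _ => ?_
        unfold markovW
        rw [Complex.real_smul, Complex.ofReal_inv, ← mul_assoc,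
          mul_inv_cancel₀ (by exact_mod_cast (hd s).ne'), one_mul]
        exact Finset.sum_congr rfl fun t _ => by rw [Complex.real_smul]
    _ = ∑ t, (wdeg ω t : ℂ) * x t := by
        rw [Finset.sum_comm]
        refine Finset.sum_congr rfl fun t _ => ?_
        rw [← Finset.sum_mul]
        congr 1
        have : ∑ s, (ω s t : ℂ) = ((∑ s, ω s t : ℝ) : ℂ) := by push_cast; rfl
        rw [this]
        congr 1
        unfold wdeg
        exact Finset.sum_congr rfl fun s _ => hs s t

lemma qf2_symm (ω : V → V → ℝ) (hs : SymmW ω) (x y : V → ℂ) :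
    qf2 ω x y = qf2 ω y x := by
  unfold qf2
  rw [Finset.sum_comm]
  refine Finset.sum_congr rfl fun s _ => Finset.sum_congr rfl fun t _ => ?_
  rw [hs t s, re_mul_conj_comm]

lemma qf2_add_left (ω : V → V → ℝ) (x x' y : V → ℂ) :
    qf2 ω (fun s => x s + x' s) y = qf2 ω x y + qf2 ω x' y := by
  unfold qf2
  simp only [add_mul, Complex.add_re, mul_add, Finset.sum_add_distrib]

lemma qf2_add_right (ω : V → V → ℝ) (x y y' : V → ℂ) :
    qf2 ω x (fun s => y s + y' s) = qf2 ω x y + qf2 ω x y' := by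
  unfold qf2
  simp only [map_add, mul_add, Complex.add_re, Finset.sum_add_distrib]

lemma qf2_sub_left (ω : V → V → ℝ) (x x' y : V → ℂ) :
    qf2 ω (fun s => x s - x' s) y = qf2 ω x y - qf2 ω x' y := by
  unfold qf2
  simp only [sub_mul, Complex.sub_re, mul_sub, Finset.sum_sub_distrib]

lemma qf2_sub_right (ω : V → V → ℝ) (x y y' : V → ℂ) :
    qf2 ω x (fun s => y s - y' s) = qf2 ω x y - qf2 ω x y' := by
  unfold qf2
  simp only [map_sub, mul_sub, Complex.sub_re, Finset.sum_sub_distrib]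

lemma qf2_polar (ω : V → V → ℝ) (hs : SymmW ω) (f y : V → ℂ) :
    qf2 ω (fun s => f s + y s) (fun s => f s + y s)
      - qf2 ω (fun s => f s - y s) (fun s => f s - y s) = 4 * qf2 ω f y := by
  rw [qf2_add_left, qf2_add_right, qf2_add_right, qf2_sub_left, qf2_sub_right, qf2_sub_right,
    qf2_symm ω hs y f]
  ring

lemma weighted_pair_zero (d : V → ℝ) (g : V → ℂ) (c : ℂ)
    (hg : ∑ s, (d s : ℂ) * g s = 0) :
    ∑ s, d s * (g s * (starRingEnd ℂ) c).re = 0 := by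
  have : ∑ s, d s * (g s * (starRingEnd ℂ) c).re
      = ((∑ s, (d s : ℂ) * g s) * (starRingEnd ℂ) c).re := by
    rw [Finset.sum_mul, Complex.re_sum]
    exact Finset.sum_congr rfl fun s _ => by rw [mul_assoc, re_real_mul]
  rw [this, hg, zero_mul, Complex.zero_re]

lemma qf_shift (ω : V → V → ℝ) (hs : SymmW ω) (g : V → ℂ) (c : ℂ)
    (hg : ∑ s, (wdeg ω s : ℂ) * g s = 0) :
    qf2 ω (fun s => g s + c) (fun s => g s + c)
      = qf2 ω g g + Complex.normSq c * ∑ s, wdeg ω s := by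
  rw [qf2_add_left, qf2_add_right, qf2_add_right]
  have h1 : qf2 ω g (fun _ => c) = 0 := by
    unfold qf2
    rw [Finset.sum_comm]
    have : ∀ t, ∑ s, ω s t * (g t * (starRingEnd ℂ) c).re
        = wdeg ω t * (g t * (starRingEnd ℂ) c).re := by
      intro t
      rw [← Finset.sum_mul]
      congr 1
      unfold wdeg
      exact Finset.sum_congr rfl fun s _ => hs s t
    calc ∑ t, ∑ s, ω s t * (g t * (starRingEnd ℂ) c).re
        = ∑ t, wdeg ω t * (g t * (starRingEnd ℂ) c).re :=
          Finset.sum_congr rfl fun t _ => this t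
      _ = 0 := weighted_pair_zero _ g c hg
  have h2 : qf2 ω (fun _ => c) g = 0 := by
    unfold qf2
    have : ∀ s, ∑ t, ω s t * (c * (starRingEnd ℂ) (g s)).re
        = wdeg ω s * (g s * (starRingEnd ℂ) c).re := by
      intro s
      rw [← Finset.sum_mul, re_mul_conj_comm]
      rfl
    calc ∑ s, ∑ t, ω s t * (c * (starRingEnd ℂ) (g s)).re
        = ∑ s, wdeg ω s * (g s * (starRingEnd ℂ) c).re :=
          Finset.sum_congr rfl fun s _ => this s
      _ = 0 := weighted_pair_zero _ g c hg
  have h3 : qf2 ω (fun _ => c) (fun _ => c) = Complex.normSq c * ∑ s, wdeg ω s := by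
    unfold qf2
    have hcc : (c * (starRingEnd ℂ) c).re = Complex.normSq c := by
      rw [Complex.mul_conj, Complex.ofReal_re]
    calc ∑ s, ∑ t, ω s t * (c * (starRingEnd ℂ) c).re
        = ∑ s, wdeg ω s * Complex.normSq c := by
          refine Finset.sum_congr rfl fun s _ => ?_
          rw [← Finset.sum_mul, hcc]
          rfl
      _ = Complex.normSq c * ∑ s, wdeg ω s := by rw [← Finset.sum_mul, mul_comm]
  rw [h1, h2, h3]
  ring

lemma nsq_shift (d : V → ℝ) (g : V → ℂ) (c : ℂ)
    (hg : ∑ s, (d s : ℂ) * g s = 0) :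
    ∑ s, d s * ‖g s + c‖ ^ 2
      = ∑ s, d s * ‖g s‖ ^ 2 + Complex.normSq c * ∑ s, d s := by
  have hpt : ∀ s, d s * ‖g s + c‖ ^ 2
      = d s * ‖g s‖ ^ 2 + 2 * (d s * (g s * (starRingEnd ℂ) c).re) + Complex.normSq c * d s := by
    intro s
    have : ‖g s + c‖ ^ 2 = ‖g s‖ ^ 2 + 2 * (g s * (starRingEnd ℂ) c).re + Complex.normSq c := by
      rw [csq, csq, Complex.normSq_apply]
      simp only [Complex.add_re, Complex.add_im, Complex.mul_re, Complex.conj_re, Complex.conj_im]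
      ring
    rw [this]; ring
  calc ∑ s, d s * ‖g s + c‖ ^ 2
      = ∑ s, (d s * ‖g s‖ ^ 2 + 2 * (d s * (g s * (starRingEnd ℂ) c).re)
          + Complex.normSq c * d s) := Finset.sum_congr rfl fun s _ => hpt s
    _ = ∑ s, d s * ‖g s‖ ^ 2 + 2 * ∑ s, d s * (g s * (starRingEnd ℂ) c).re
        + Complex.normSq c * ∑ s, d s := by
        rw [Finset.sum_add_distrib, Finset.sum_add_distrib, ← Finset.mul_sum, ← Finset.mul_sum]
    _ = ∑ s, d s * ‖g s‖ ^ 2 + Complex.normSq c * ∑ s, d s := by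
        rw [weighted_pair_zero d g c hg]; ring

lemma pair_cs (d : V → ℝ) (hd0 : ∀ s, 0 ≤ d s) (u v : V → ℂ) :
    |∑ s, d s * (u s * (starRingEnd ℂ) (v s)).re|
      ≤ Real.sqrt (∑ s, d s * ‖u s‖ ^ 2) * Real.sqrt (∑ s, d s * ‖v s‖ ^ 2) := by
  have h1 : |∑ s, d s * (u s * (starRingEnd ℂ) (v s)).re| ≤ ∑ s, d s * (‖u s‖ * ‖v s‖) := by
    refine (Finset.abs_sum_le_sum_abs _ _).trans (Finset.sum_le_sum fun s _ => ?_)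
    rw [abs_mul, abs_of_nonneg (hd0 s)]
    refine mul_le_mul_of_nonneg_left ?_ (hd0 s)
    refine (Complex.abs_re_le_norm _).trans (le_of_eq ?_)
    rw [norm_mul, Complex.norm_conj]
  have heq : ∑ s, Real.sqrt (d s) * ‖u s‖ * (Real.sqrt (d s) * ‖v s‖)
      = ∑ s, d s * (‖u s‖ * ‖v s‖) := by
    refine Finset.sum_congr rfl fun s _ => ?_
    rw [show Real.sqrt (d s) * ‖u s‖ * (Real.sqrt (d s) * ‖v s‖)
      = Real.sqrt (d s) * Real.sqrt (d s) * (‖u s‖ * ‖v s‖) by ring,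
      Real.mul_self_sqrt (hd0 s)]
  have hcs := Finset.sum_mul_sq_le_sq_mul_sq Finset.univ
    (fun s => Real.sqrt (d s) * ‖u s‖) (fun s => Real.sqrt (d s) * ‖v s‖)
  rw [heq] at hcs
  have hsq : ∀ (w : V → ℂ), ∑ s, (Real.sqrt (d s) * ‖w s‖) ^ 2 = ∑ s, d s * ‖w s‖ ^ 2 :=
    fun w => Finset.sum_congr rfl fun s _ => by rw [mul_pow, Real.sq_sqrt (hd0 s)]
  rw [hsq u, hsq v] at hcs
  have hnn : (0:ℝ) ≤ ∑ s, d s * (‖u s‖ * ‖v s‖) :=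
    Finset.sum_nonneg fun s _ => mul_nonneg (hd0 s) (by positivity)
  have h2 : ∑ s, d s * (‖u s‖ * ‖v s‖)
      ≤ Real.sqrt (∑ s, d s * ‖u s‖ ^ 2) * Real.sqrt (∑ s, d s * ‖v s‖ ^ 2) := by
    rw [← Real.sqrt_sq hnn, ← Real.sqrt_mul (Finset.sum_nonneg fun s _ =>
      mul_nonneg (hd0 s) (by positivity))]
    exact Real.sqrt_le_sqrt hcs
  exact h1.trans h2

end Aux2
section Aux3
variable [Fintype V]

lemma quad_bound [Nonempty V] (ω : V → V → ℝ) (hs : SymmW ω) (hn : NonnegW ω)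
    (hd : ∀ s, 0 < wdeg ω s) {M : ℝ} (hM0 : 0 ≤ M)
    (hop : ∀ g : V → ℂ, (∑ s, (wdeg ω s : ℂ) * g s) = 0 →
      l2d ω (markovW ω g) ≤ M * l2d ω g)
    (f : V → ℂ) :
    |qf2 ω f f| ≤ M * ∑ s, wdeg ω s * ‖f s‖ ^ 2
      + (1 - M) * (Complex.normSq (∑ s, (wdeg ω s : ℂ) * f s) / ∑ s, wdeg ω s) := by
  set D : ℝ := ∑ s, wdeg ω s with hD
  have hDpos : 0 < D := Finset.sum_pos (fun s _ => hd s) Finset.univ_nonempty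
  set z : ℂ := ∑ s, (wdeg ω s : ℂ) * f s with hz
  set c : ℂ := z / (D : ℂ) with hc
  set g : V → ℂ := fun s => f s - c with hgdef
  have hDC : ∑ s, (wdeg ω s : ℂ) = (D : ℂ) := by rw [hD]; push_cast; rfl
  have hg : ∑ s, (wdeg ω s : ℂ) * g s = 0 := by
    have h1 : ∑ s, (wdeg ω s : ℂ) * g s = z - (∑ s, (wdeg ω s : ℂ)) * c := by
      rw [hz, Finset.sum_mul, ← Finset.sum_sub_distrib]
      exact Finset.sum_congr rfl fun s _ => by rw [hgdef]; ring
    rw [h1, hDC, hc, mul_div_cancel₀ z (by exact_mod_cast hDpos.ne')]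
    ring
  have hfg : f = fun s => g s + c := by funext s; rw [hgdef]; ring
  have hqf : qf2 ω f f = qf2 ω g g + Complex.normSq c * D := by
    conv_lhs => rw [hfg]
    exact qf_shift ω hs g c hg
  have hnsq : ∑ s, wdeg ω s * ‖f s‖ ^ 2
      = ∑ s, wdeg ω s * ‖g s‖ ^ 2 + Complex.normSq c * D := by
    conv_lhs => rw [hfg]
    exact nsq_shift (wdeg ω) g c hg
  have hqg : |qf2 ω g g| ≤ M * ∑ s, wdeg ω s * ‖g s‖ ^ 2 := by
    have heq : qf2 ω g g = ∑ s, wdeg ω s * (markovW ω g s * (starRingEnd ℂ) (g s)).re :=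
      (markov_pair ω hd g g).symm
    have hcs := pair_cs (wdeg ω) (fun s => (hd s).le) (markovW ω g) g
    have hbd := hop g hg
    have hgn0 : (0:ℝ) ≤ ∑ s, wdeg ω s * ‖g s‖ ^ 2 :=
      Finset.sum_nonneg fun s _ => mul_nonneg (hd s).le (by positivity)
    calc |qf2 ω g g|
        = |∑ s, wdeg ω s * (markovW ω g s * (starRingEnd ℂ) (g s)).re| := by rw [heq]
      _ ≤ l2d ω (markovW ω g) * l2d ω g := hcs
      _ ≤ (M * l2d ω g) * l2d ω g :=
          mul_le_mul_of_nonneg_right hbd (Real.sqrt_nonneg _)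
      _ = M * (l2d ω g * l2d ω g) := by ring
      _ = M * ∑ s, wdeg ω s * ‖g s‖ ^ 2 := by
          unfold l2d; rw [Real.mul_self_sqrt hgn0]
  have hnsqc : (0:ℝ) ≤ Complex.normSq c * D := mul_nonneg (Complex.normSq_nonneg c) hDpos.le
  have hcz : Complex.normSq c * D = Complex.normSq z / D := by
    rw [hc, map_div₀, Complex.normSq_ofReal]
    field_simp
  calc |qf2 ω f f| ≤ |qf2 ω g g| + Complex.normSq c * D := by
        rw [hqf]; exact (abs_add_le _ _).trans (by rw [abs_of_nonneg hnsqc])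
    _ ≤ M * ∑ s, wdeg ω s * ‖g s‖ ^ 2 + Complex.normSq c * D := by linarith
    _ = M * ∑ s, wdeg ω s * ‖f s‖ ^ 2 + (1 - M) * (Complex.normSq c * D) := by
        rw [hnsq]; ring
    _ = M * ∑ s, wdeg ω s * ‖f s‖ ^ 2 + (1 - M) * (Complex.normSq z / D) := by rw [hcz]

lemma ptwise1 (a b A B : ℝ) (ha : 0 < a) (hb : 0 < b) (hA : 0 < A) (hB : 0 < B) :
    (a - A / (A + B) * (a + b)) ^ 2 / (a + b) * (1 / A + 1 / B) ≤ |a / A - b / B| := by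
  have hAB : 0 < A + B := by linarith
  have hab : 0 < a + b := by linarith
  set w : ℝ := a / A - b / B with hw
  have hwf : a - A / (A + B) * (a + b) = A * B / (A + B) * w := by
    rw [hw]; field_simp; ring
  have habs : |w| ≤ a / A + b / B := by
    rw [hw]; exact (abs_sub _ _).trans (by rw [abs_of_pos (by positivity), abs_of_pos (by positivity)])
  have key : A * B * |w| ≤ (A + B) * (a + b) := by
    have h1 : A * B * |w| ≤ A * B * (a / A + b / B) :=
      mul_le_mul_of_nonneg_left habs (by positivity)
    have h2 : A * B * (a / A + b / B) = B * a + A * b := by field_simp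
    nlinarith
  have hsqw : w ^ 2 = |w| * |w| := by rw [abs_mul_abs_self w, sq]
  rw [hwf]
  rw [div_mul_eq_mul_div, div_le_iff₀ hab, mul_pow, div_pow]
  have h1AB : 1 / A + 1 / B = (A + B) / (A * B) := by field_simp; ring
  rw [h1AB]
  have hABn : (A + B) ^ 2 ≠ 0 := by positivity
  have lhs_eq : (A * B) ^ 2 / (A + B) ^ 2 * w ^ 2 * ((A + B) / (A * B))
      = A * B / (A + B) * w ^ 2 := by field_simp
  rw [lhs_eq, div_mul_eq_mul_div, div_le_iff₀ hAB]
  calc A * B * w ^ 2 = (A * B * |w|) * |w| := by rw [hsqw]; ring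
    _ ≤ ((A + B) * (a + b)) * |w| := mul_le_mul_of_nonneg_right key (abs_nonneg w)
    _ = |w| * (a + b) * (A + B) := by ring

lemma ptwise2 (a b A B n : ℝ) (hA : 0 < A) (hB : 0 < B) (hn : 0 < n) :
    |a / A - b / B| ≤ |a - A / n| / A + |b - B / n| / B := by
  have h : a / A - b / B = (a - A / n) / A - (b - B / n) / B := by
    field_simp
    ring
  rw [h]
  calc |(a - A / n) / A - (b - B / n) / B|
      ≤ |(a - A / n) / A| + |(b - B / n) / B| := abs_sub _ _
    _ = |a - A / n| / A + |b - B / n| / B := by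
        rw [abs_div, abs_div, abs_of_pos hA, abs_of_pos hB]

end Aux3
lemma par_pt (a b : ℂ) : ‖a + b‖ ^ 2 + ‖a - b‖ ^ 2 = 2 * ‖a‖ ^ 2 + 2 * ‖b‖ ^ 2 := by
  rw [csq, csq, csq, csq]
  simp only [Complex.add_re, Complex.add_im, Complex.sub_re, Complex.sub_im]
  ring

/-- spectral gap of the union of two graphs with `L¹`-concentrated degrees:
`‖A⁰_{ω₁+ω₂}‖ ≤ δ + (1−δ) max(‖A⁰_{ω₁}‖, ‖A⁰_{ω₂}‖)`. -/
theorem stmt17 {V : Type*} [Fintype V] [Nonempty V]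
    (ω₁ ω₂ : V → V → ℝ) (hs1 : SymmW ω₁) (hs2 : SymmW ω₂)
    (hn1 : NonnegW ω₁) (hn2 : NonnegW ω₂)
    (hd1 : ∀ s, 0 < wdeg ω₁ s) (hd2 : ∀ s, 0 < wdeg ω₂ s)
    (D₁ D₂ δ : ℝ)
    (hD₁ : D₁ = ∑ s, wdeg ω₁ s) (hD₂ : D₂ = ∑ s, wdeg ω₂ s)
    (hδ : δ = ∑ s, (|wdeg ω₁ s - D₁ / (Fintype.card V : ℝ)| / D₁ +
                    |wdeg ω₂ s - D₂ / (Fintype.card V : ℝ)| / D₂)) :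
    opA0 (fun s t => ω₁ s t + ω₂ s t) ≤ δ + (1 - δ) * max (opA0 ω₁) (opA0 ω₂) := by
  set ω : V → V → ℝ := fun s t => ω₁ s t + ω₂ s t with hω
  have hsd : ∀ s, wdeg ω s = wdeg ω₁ s + wdeg ω₂ s := fun s => by
    unfold wdeg
    rw [← Finset.sum_add_distrib]
  have hs : SymmW ω := fun s t => by simp only [hω]; rw [hs1 s t, hs2 s t]
  have hn : NonnegW ω := fun s t => add_nonneg (hn1 s t) (hn2 s t)
  have hd : ∀ s, 0 < wdeg ω s := fun s => by rw [hsd s]; exact add_pos (hd1 s) (hd2 s)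
  have hD1pos : 0 < D₁ := hD₁ ▸ Finset.sum_pos (fun s _ => hd1 s) Finset.univ_nonempty
  have hD2pos : 0 < D₂ := hD₂ ▸ Finset.sum_pos (fun s _ => hd2 s) Finset.univ_nonempty
  have hcard : (0:ℝ) < (Fintype.card V : ℝ) := by
    exact_mod_cast Fintype.card_pos
  have hδ0 : 0 ≤ δ := hδ ▸ Finset.sum_nonneg fun s _ => add_nonneg
    (div_nonneg (abs_nonneg _) hD1pos.le) (div_nonneg (abs_nonneg _) hD2pos.le)
  set M : ℝ := max (opA0 ω₁) (opA0 ω₂) with hM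
  have hM0 : 0 ≤ M := le_trans (opA0_nonneg ω₁ hs1 hn1 hd1) (le_max_left _ _)
  have hM1 : M ≤ 1 := max_le (opA0_le_one ω₁ hs1 hn1 hd1) (opA0_le_one ω₂ hs2 hn2 hd2)
  have hop1 : ∀ g : V → ℂ, (∑ s, (wdeg ω₁ s : ℂ) * g s) = 0 →
      l2d ω₁ (markovW ω₁ g) ≤ M * l2d ω₁ g := fun g hg =>
    (opA0_spec ω₁ hs1 hn1 hd1 g hg).trans
      (mul_le_mul_of_nonneg_right (le_max_left _ _) (Real.sqrt_nonneg _))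
  have hop2 : ∀ g : V → ℂ, (∑ s, (wdeg ω₂ s : ℂ) * g s) = 0 →
      l2d ω₂ (markovW ω₂ g) ≤ M * l2d ω₂ g := fun g hg =>
    (opA0_spec ω₂ hs2 hn2 hd2 g hg).trans
      (mul_le_mul_of_nonneg_right (le_max_right _ _) (Real.sqrt_nonneg _))
  set C : ℝ := δ + (1 - δ) * M with hC
  have hC0 : 0 ≤ C := by nlinarith
  -- the quadratic-form bound
  have hkey : ∀ g : V → ℂ, (∑ s, (wdeg ω s : ℂ) * g s) = 0 →
      |qf2 ω g g| ≤ C * ∑ s, wdeg ω s * ‖g s‖ ^ 2 := by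
    intro g hg
    set N : ℝ := ∑ s, wdeg ω s * ‖g s‖ ^ 2 with hN
    have hN0 : 0 ≤ N := Finset.sum_nonneg fun s _ => mul_nonneg (hd s).le (by positivity)
    have hNsplit : N = (∑ s, wdeg ω₁ s * ‖g s‖ ^ 2) + ∑ s, wdeg ω₂ s * ‖g s‖ ^ 2 := by
      rw [hN, ← Finset.sum_add_distrib]
      exact Finset.sum_congr rfl fun s _ => by rw [hsd s]; ring
    have hqsplit : qf2 ω g g = qf2 ω₁ g g + qf2 ω₂ g g := by
      unfold qf2
      rw [← Finset.sum_add_distrib]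
      refine Finset.sum_congr rfl fun s _ => ?_
      rw [← Finset.sum_add_distrib]
      refine Finset.sum_congr rfl fun t _ => ?_
      show (ω₁ s t + ω₂ s t) * _ = _
      ring
    set z : ℂ := ∑ s, (wdeg ω₁ s : ℂ) * g s with hz
    have hz2 : ∑ s, (wdeg ω₂ s : ℂ) * g s = -z := by
      have hsum : z + ∑ s, (wdeg ω₂ s : ℂ) * g s = 0 := by
        rw [hz, ← Finset.sum_add_distrib, ← hg]
        refine Finset.sum_congr rfl fun s _ => ?_
        rw [hsd s]
        push_cast
        ring
      linear_combination hsum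
    have hq1 := quad_bound ω₁ hs1 hn1 hd1 hM0 hop1 g
    have hq2 := quad_bound ω₂ hs2 hn2 hd2 hM0 hop2 g
    rw [← hz, ← hD₁] at hq1
    rw [hz2, ← hD₂, Complex.normSq_neg] at hq2
    -- the discrepancy bound
    have hX : Complex.normSq z / D₁ + Complex.normSq z / D₂ ≤ δ * N := by
      set k : V → ℝ := fun s => wdeg ω₁ s - D₁ / (D₁ + D₂) * wdeg ω s with hk
      have hzk : z = ∑ s, (k s : ℂ) * g s := by
        have h1 : ∑ s, (k s : ℂ) * g s
            = (∑ s, (wdeg ω₁ s : ℂ) * g s)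
              - (↑(D₁ / (D₁ + D₂)) * ∑ s, (wdeg ω s : ℂ) * g s) := by
          rw [Finset.mul_sum, ← Finset.sum_sub_distrib]
          refine Finset.sum_congr rfl fun s _ => ?_
          rw [hk]
          push_cast
          ring
        rw [h1, hg, mul_zero, sub_zero, hz]
      have hcs : Complex.normSq z ≤ (∑ s, k s ^ 2 / wdeg ω s) * N := by
        have h2 := cs_weighted k (wdeg ω) hd g
        calc Complex.normSq z = ‖z‖ ^ 2 := by
              rw [Complex.sq_norm]
          _ = ‖∑ s, (k s : ℂ) * g s‖ ^ 2 := by rw [← hzk]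
          _ ≤ (∑ s, k s ^ 2 / wdeg ω s) * N := h2
      have hsumk0 : 0 ≤ ∑ s, k s ^ 2 / wdeg ω s :=
        Finset.sum_nonneg fun s _ => div_nonneg (by positivity) (hd s).le
      have hptsum : (∑ s, k s ^ 2 / wdeg ω s) * (1 / D₁ + 1 / D₂) ≤ δ := by
        rw [Finset.sum_mul]
        rw [hδ]
        refine Finset.sum_le_sum fun s _ => ?_
        have hp1 := ptwise1 (wdeg ω₁ s) (wdeg ω₂ s) D₁ D₂ (hd1 s) (hd2 s) hD1pos hD2pos
        have hp2 := ptwise2 (wdeg ω₁ s) (wdeg ω₂ s) D₁ D₂ (Fintype.card V : ℝ)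
          hD1pos hD2pos hcard
        have hkval : k s = wdeg ω₁ s - D₁ / (D₁ + D₂) * (wdeg ω₁ s + wdeg ω₂ s) := by
          simp only [hk]
          rw [hsd s]
        rw [hkval, hsd s]
        exact le_trans hp1 hp2
      have hinv0 : (0:ℝ) ≤ 1 / D₁ + 1 / D₂ := by positivity
      calc Complex.normSq z / D₁ + Complex.normSq z / D₂
          = Complex.normSq z * (1 / D₁ + 1 / D₂) := by ring
        _ ≤ ((∑ s, k s ^ 2 / wdeg ω s) * N) * (1 / D₁ + 1 / D₂) :=
            mul_le_mul_of_nonneg_right hcs hinv0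
        _ = ((∑ s, k s ^ 2 / wdeg ω s) * (1 / D₁ + 1 / D₂)) * N := by ring
        _ ≤ δ * N := mul_le_mul_of_nonneg_right hptsum hN0
    have h1M : 0 ≤ 1 - M := by linarith
    calc |qf2 ω g g| ≤ |qf2 ω₁ g g| + |qf2 ω₂ g g| := by
          rw [hqsplit]; exact abs_add_le _ _
      _ ≤ (M * ∑ s, wdeg ω₁ s * ‖g s‖ ^ 2 + (1 - M) * (Complex.normSq z / D₁))
          + (M * ∑ s, wdeg ω₂ s * ‖g s‖ ^ 2 + (1 - M) * (Complex.normSq z / D₂)) := by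
          exact add_le_add hq1 hq2
      _ = M * N + (1 - M) * (Complex.normSq z / D₁ + Complex.normSq z / D₂) := by
          rw [hNsplit]; ring
      _ ≤ M * N + (1 - M) * (δ * N) := by
          exact add_le_add_right (mul_le_mul_of_nonneg_left hX h1M) _
      _ = C * N := by rw [hC]; ring
  -- polarization: quadratic form bound implies operator norm bound
  have hmem : C ∈ {K : ℝ | 0 ≤ K ∧ ∀ f : V → ℂ, (∑ s, (wdeg ω s : ℂ) * f s) = 0 →
      l2d ω (markovW ω f) ≤ K * l2d ω f} := by
    refine ⟨hC0, fun f hf => ?_⟩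
    set N : ℝ := ∑ s, wdeg ω s * ‖markovW ω f s‖ ^ 2 with hNd
    set F : ℝ := ∑ s, wdeg ω s * ‖f s‖ ^ 2 with hF
    have hN0 : 0 ≤ N := Finset.sum_nonneg fun s _ => mul_nonneg (hd s).le (by positivity)
    have hF0 : 0 ≤ F := Finset.sum_nonneg fun s _ => mul_nonneg (hd s).le (by positivity)
    have hTf : ∑ s, (wdeg ω s : ℂ) * markovW ω f s = 0 := by
      rw [mean_markov ω hs hd f]; exact hf
    have hkey2 : ∀ t : ℝ, t * N ≤ C / 2 * (F + t ^ 2 * N) := by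
      intro t
      set y : V → ℂ := fun s => (t : ℂ) * markovW ω f s with hy
      have hymean : ∑ s, (wdeg ω s : ℂ) * y s = 0 := by
        have h1 : ∑ s, (wdeg ω s : ℂ) * y s
            = (t : ℂ) * ∑ s, (wdeg ω s : ℂ) * markovW ω f s := by
          rw [Finset.mul_sum]
          exact Finset.sum_congr rfl fun s _ => by rw [hy]; ring
        rw [h1, hTf, mul_zero]
      have hfy1 : ∑ s, (wdeg ω s : ℂ) * (f s + y s) = 0 := by
        simp only [mul_add]
        rw [Finset.sum_add_distrib, hf, hymean, add_zero]
      have hfy2 : ∑ s, (wdeg ω s : ℂ) * (f s - y s) = 0 := by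
        simp only [mul_sub]
        rw [Finset.sum_sub_distrib, hf, hymean, sub_zero]
      have h1 := hkey (fun s => f s + y s) hfy1
      have h2 := hkey (fun s => f s - y s) hfy2
      have hpolar := qf2_polar ω hs f y
      have hqfy : qf2 ω f y = t * N := by
        rw [← markov_pair ω hd f y]
        calc ∑ s, wdeg ω s * (markovW ω f s * (starRingEnd ℂ) (y s)).re
            = ∑ s, t * (wdeg ω s * ‖markovW ω f s‖ ^ 2) := by
              refine Finset.sum_congr rfl fun s _ => ?_
              rw [hy]
              rw [map_mul, Complex.conj_ofReal]
              rw [show markovW ω f s * ((t : ℂ) * (starRingEnd ℂ) (markovW ω f s))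
                = (t : ℂ) * (markovW ω f s * (starRingEnd ℂ) (markovW ω f s)) from by ring]
              rw [re_real_mul, mul_conj_self_re]
              ring
          _ = t * N := by rw [← Finset.mul_sum, hNd]
      have hyn : ∑ s, wdeg ω s * ‖y s‖ ^ 2 = t ^ 2 * N := by
        calc ∑ s, wdeg ω s * ‖y s‖ ^ 2
            = ∑ s, t ^ 2 * (wdeg ω s * ‖markovW ω f s‖ ^ 2) := by
              refine Finset.sum_congr rfl fun s _ => ?_
              rw [hy]
              rw [norm_mul, Complex.norm_real, Real.norm_eq_abs, mul_pow, sq_abs]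
              ring
          _ = t ^ 2 * N := by rw [← Finset.mul_sum, hNd]
      have hpar : (∑ s, wdeg ω s * ‖f s + y s‖ ^ 2) + (∑ s, wdeg ω s * ‖f s - y s‖ ^ 2)
          = 2 * F + 2 * (t ^ 2 * N) := by
        rw [← hyn, hF]
        rw [← Finset.sum_add_distrib, Finset.mul_sum, Finset.mul_sum, ← Finset.sum_add_distrib]
        refine Finset.sum_congr rfl fun s _ => ?_
        have := par_pt (f s) (y s)
        linear_combination wdeg ω s * this
      have ha1 := le_abs_self (qf2 ω (fun s => f s + y s) (fun s => f s + y s))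
      have ha2 := neg_abs_le (qf2 ω (fun s => f s - y s) (fun s => f s - y s))
      have hnn1 : (0:ℝ) ≤ ∑ s, wdeg ω s * ‖f s + y s‖ ^ 2 :=
        Finset.sum_nonneg fun s _ => mul_nonneg (hd s).le (by positivity)
      have hnn2 : (0:ℝ) ≤ ∑ s, wdeg ω s * ‖f s - y s‖ ^ 2 :=
        Finset.sum_nonneg fun s _ => mul_nonneg (hd s).le (by positivity)
      nlinarith [h1, h2, hpolar, hqfy, hpar, ha1, ha2]
    have hl2N : l2d ω (markovW ω f) = Real.sqrt N := by rw [l2d, hNd]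
    have hl2F : l2d ω f = Real.sqrt F := by rw [l2d, hF]
    rw [hl2N, hl2F]
    rcases eq_or_lt_of_le hN0 with hNz | hNpos
    · rw [← hNz, Real.sqrt_zero]
      exact mul_nonneg hC0 (Real.sqrt_nonneg _)
    · by_cases hFz : F = 0
      · exfalso
        have hsum0 : ∑ s, wdeg ω s * ‖f s‖ ^ 2 = 0 := by rw [← hF]; exact hFz
        have hterms := (Finset.sum_eq_zero_iff_of_nonneg
          (fun i (_ : i ∈ Finset.univ) =>
            mul_nonneg (hd i).le (by positivity : (0:ℝ) ≤ ‖f i‖ ^ 2))).mp hsum0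
        have hf0 : ∀ s, f s = 0 := by
          intro s
          have h1 := hterms s (Finset.mem_univ s)
          have h2 : ‖f s‖ ^ 2 = 0 := by
            rcases mul_eq_zero.mp h1 with h | h
            · exact absurd h (hd s).ne'
            · exact h
          have h3 : ‖f s‖ = 0 := by nlinarith [norm_nonneg (f s)]
          exact norm_eq_zero.mp h3
        have hTf0 : ∀ s, markovW ω f s = 0 := by
          intro s
          unfold markovW
          rw [Finset.sum_eq_zero (fun t _ => by rw [hf0 t, smul_zero]), smul_zero]
        have hNz : N = 0 := by
          rw [hNd]
          exact Finset.sum_eq_zero fun s _ => by rw [hTf0 s, norm_zero]; ring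
        exact hNpos.ne' hNz
      · have hFpos : 0 < F := lt_of_le_of_ne hF0 (Ne.symm hFz)
        have hsF : 0 < Real.sqrt F := Real.sqrt_pos.mpr hFpos
        have hsN : 0 < Real.sqrt N := Real.sqrt_pos.mpr hNpos
        set t : ℝ := Real.sqrt F / Real.sqrt N with ht
        have ht2 : t ^ 2 * N = F := by
          rw [ht, div_pow, Real.sq_sqrt hF0, Real.sq_sqrt hN0]
          field_simp
        have htN : t * N = Real.sqrt F * Real.sqrt N := by
          rw [ht]
          field_simp
          linear_combination (Real.mul_self_sqrt hN0).symm
        have hk2 := hkey2 t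
        rw [htN, ht2] at hk2
        -- √F √N ≤ C/2 (F + F) = C F
        have hCF : Real.sqrt F * Real.sqrt N ≤ C * F := by
          have hr : C / 2 * (F + F) = C * F := by ring
          exact hk2.trans (le_of_eq hr)
        rw [← mul_le_mul_iff_right₀ hsF]
        calc Real.sqrt F * Real.sqrt N ≤ C * F := hCF
          _ = Real.sqrt F * (C * Real.sqrt F) := by
              linear_combination C * (Real.mul_self_sqrt hF0).symm
  exact csInf_le ⟨0, fun K hK => hK.1⟩ hmem
end
end

section
/- Let V be a finite set with n = |V| ≥ 1, and let ω₁, ω₂ : V×V → ℝ≥0 be symmetric weight functions with all degrees positive. Let D_i = ∑_{s∈V} d_{ω_i}(s) and δ = ∑_{s∈V} ( |d_{ω₁}(s) − D₁/n| / D₁ + |d_{ω₂}(s) − D₂/n| / D₂ ). Let f : V → ℂ satisfy ∑_s (d_{ω₁}(s)+d_{ω₂}(s)) f(s) = 0 and ∑_s (d_{ω₁}(s)+d_{ω₂}(s)) |f(s)|² = 1, and set c₁ = D₁^{-1} ∑_s d_{ω₁}(s) f(s) (the value of the orthogonal projection of f onto the constant functions in L²(V, d_{ω₁})). Then D₁ |c₁|²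 ≤ δ · D₂ / (D₁ + D₂). -/
open scoped BigOperators
open Finset MeasureTheory

noncomputable section

variable {V : Type*}

/-- key estimate in the proof of the spectral gap for unions of graphs. If `f`
has zero mean and unit norm in `L²(V, d_{ω₁}+d_{ω₂})`, and `c₁` is the value of the projection
of `f` onto the constants in `L²(V, d_{ω₁})`, then `D₁|c₁|² ≤ δ D₂/(D₁+D₂)`. -/
theorem stmt18 {V : Type*} [Fintype V] [Nonempty V]
    (ω₁ ω₂ : V → V → ℝ) (hs1 : SymmW ω₁) (hs2 : SymmW ω₂)
    (hn1 : NonnegW ω₁) (hn2 : NonnegW ω₂)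
    (hd1 : ∀ s, 0 < wdeg ω₁ s) (hd2 : ∀ s, 0 < wdeg ω₂ s)
    (D₁ D₂ δ : ℝ)
    (hD₁ : D₁ = ∑ s, wdeg ω₁ s) (hD₂ : D₂ = ∑ s, wdeg ω₂ s)
    (hδ : δ = ∑ s, (|wdeg ω₁ s - D₁ / (Fintype.card V : ℝ)| / D₁ +
                    |wdeg ω₂ s - D₂ / (Fintype.card V : ℝ)| / D₂))
    (f : V → ℂ)
    (hmean : (∑ s, ((wdeg ω₁ s + wdeg ω₂ s : ℝ) : ℂ) * f s) = 0)
    (hnorm : (∑ s, (wdeg ω₁ s + wdeg ω₂ s) * ‖f s‖ ^ 2) = 1)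
    (c₁ : ℂ) (hc₁ : c₁ = (D₁ : ℂ)⁻¹ * ∑ s, (wdeg ω₁ s : ℂ) * f s) :
    D₁ * ‖c₁‖ ^ 2 ≤ δ * D₂ / (D₁ + D₂) := by
  have hD1pos : 0 < D₁ := hD₁ ▸ Finset.sum_pos (fun s _ => hd1 s) Finset.univ_nonempty
  have hD2pos : 0 < D₂ := hD₂ ▸ Finset.sum_pos (fun s _ => hd2 s) Finset.univ_nonempty
  have hGpos : 0 < D₁ + D₂ := by linarith
  set n : ℝ := (Fintype.card V : ℝ) with hn
  set g : V → ℝ := fun s => wdeg ω₁ s + wdeg ω₂ s with hg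
  have hgpos : ∀ s, 0 < g s := fun s => add_pos (hd1 s) (hd2 s)
  set B : V → ℝ := fun s => (D₂ * wdeg ω₁ s - D₁ * wdeg ω₂ s) / (D₁ + D₂) with hB
  set δs : V → ℝ := fun s => |wdeg ω₁ s - D₁ / n| / D₁ + |wdeg ω₂ s - D₂ / n| / D₂ with hδs
  have hδspos : ∀ s, 0 ≤ δs s := fun s => by
    simp only [hδs]; positivity
  -- Step 1: D₁ c₁ = ∑ B s * f s
  have key : (D₁ : ℂ) * c₁ = ∑ s, (B s : ℂ) * f s := by
    have hBeq : ∀ s, (B s : ℂ) = (wdeg ω₁ s : ℂ) - ((D₁ / (D₁ + D₂) : ℝ) : ℂ) * ((g s : ℝ) : ℂ) := by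
      intro s
      have h1 : B s = wdeg ω₁ s - (D₁ / (D₁ + D₂)) * g s := by
        simp only [hB, hg]; field_simp; ring
      rw [h1]; push_cast; ring
    rw [hc₁, ← mul_assoc, mul_inv_cancel₀ (by exact_mod_cast hD1pos.ne'), one_mul]
    have h3 : (∑ s, ((g s : ℝ) : ℂ) * f s) = 0 := hmean
    refine Eq.symm ?_
    calc ∑ s, (B s : ℂ) * f s
        = ∑ s, ((wdeg ω₁ s : ℂ) * f s
            - ((D₁ / (D₁ + D₂) : ℝ) : ℂ) * (((g s : ℝ) : ℂ) * f s)) :=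
          Finset.sum_congr rfl fun s _ => by rw [hBeq s]; ring
      _ = (∑ s, (wdeg ω₁ s : ℂ) * f s)
            - ((D₁ / (D₁ + D₂) : ℝ) : ℂ) * ∑ s, ((g s : ℝ) : ℂ) * f s := by
          rw [Finset.sum_sub_distrib, Finset.mul_sum]
      _ = ∑ s, (wdeg ω₁ s : ℂ) * f s := by rw [h3, mul_zero, sub_zero]
  -- Step 2: triangle inequality
  set S : ℝ := ∑ s, |B s| * ‖f s‖ with hS
  have hnormle : ‖(D₁ : ℂ) * c₁‖ ≤ S := by
    rw [key]
    refine (norm_sum_le _ _).trans_eq (Finset.sum_congr rfl fun s _ => ?_)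
    rw [norm_mul, Complex.norm_real, Real.norm_eq_abs]
  -- Step 3: Cauchy-Schwarz
  have hCS : S ^ 2 ≤ ∑ s, B s ^ 2 / g s := by
    have h := Finset.sum_mul_sq_le_sq_mul_sq Finset.univ
      (fun s => |B s| / Real.sqrt (g s)) (fun s => Real.sqrt (g s) * ‖f s‖)
    have e1 : ∀ s : V, |B s| / Real.sqrt (g s) * (Real.sqrt (g s) * ‖f s‖) = |B s| * ‖f s‖ := by
      intro s
      have hgs : Real.sqrt (g s) ≠ 0 := ne_of_gt (Real.sqrt_pos.2 (hgpos s))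
      field_simp
    have e2 : ∀ s : V, (|B s| / Real.sqrt (g s)) ^ 2 = B s ^ 2 / g s := by
      intro s
      rw [div_pow, sq_abs, Real.sq_sqrt (hgpos s).le]
    have e3 : ∀ s : V, (Real.sqrt (g s) * ‖f s‖) ^ 2 = g s * ‖f s‖ ^ 2 := by
      intro s
      rw [mul_pow, Real.sq_sqrt (hgpos s).le]
    rw [Finset.sum_congr rfl (fun s _ => e1 s), Finset.sum_congr rfl (fun s _ => e2 s),
      Finset.sum_congr rfl (fun s _ => e3 s)] at h
    calc S ^ 2 ≤ (∑ s, B s ^ 2 / g s) * ∑ s, g s * ‖f s‖ ^ 2 := h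
      _ = ∑ s, B s ^ 2 / g s := by rw [hnorm, mul_one]
  -- Step 4: pointwise bound
  have hptwise : ∀ s, B s ^ 2 / g s ≤ D₁ * D₂ * δs s / (D₁ + D₂) := by
    intro s
    set X : ℝ := D₂ * wdeg ω₁ s - D₁ * wdeg ω₂ s with hX
    have habs : |X| ≤ D₁ * D₂ * δs s := by
      have h1 : X = D₂ * (wdeg ω₁ s - D₁ / n) - D₁ * (wdeg ω₂ s - D₂ / n) := by
        rw [hX]; ring
      rw [h1]
      refine (abs_sub _ _).trans ?_
      rw [abs_mul, abs_mul, abs_of_pos hD2pos, abs_of_pos hD1pos]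
      have heq : D₁ * D₂ * δs s = D₂ * |wdeg ω₁ s - D₁ / n| + D₁ * |wdeg ω₂ s - D₂ / n| := by
        simp only [hδs]; field_simp
      linarith [heq.ge]
    have habs2 : |X| ≤ (D₁ + D₂) * g s := by
      rw [abs_le]
      constructor
      · have := (hd1 s).le; have := (hd2 s).le
        simp only [hX, hg]; nlinarith
      · have := (hd1 s).le; have := (hd2 s).le
        simp only [hX, hg]; nlinarith
    have hX2 : X ^ 2 ≤ (D₁ * D₂ * δs s) * ((D₁ + D₂) * g s) := by
      calc X ^ 2 = |X| * |X| := by rw [← sq_abs]; ring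
        _ ≤ (D₁ * D₂ * δs s) * ((D₁ + D₂) * g s) :=
          mul_le_mul habs habs2 (abs_nonneg _) (by positivity)
    have hrw : B s ^ 2 / g s = X ^ 2 / ((D₁ + D₂) ^ 2 * g s) := by
      simp only [hB]
      rw [← hX, div_pow, div_div]
    rw [hrw, div_le_div_iff₀ (mul_pos (by positivity) (hgpos s)) hGpos]
    calc X ^ 2 * (D₁ + D₂) ≤ (D₁ * D₂ * δs s) * ((D₁ + D₂) * g s) * (D₁ + D₂) :=
          mul_le_mul_of_nonneg_right hX2 hGpos.le
      _ = D₁ * D₂ * δs s * ((D₁ + D₂) ^ 2 * g s) := by ring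
  -- Step 5: sum up
  have hsum : (∑ s, B s ^ 2 / g s) ≤ D₁ * D₂ * δ / (D₁ + D₂) := by
    calc (∑ s, B s ^ 2 / g s) ≤ ∑ s, D₁ * D₂ * δs s / (D₁ + D₂) :=
          Finset.sum_le_sum fun s _ => hptwise s
      _ = D₁ * D₂ * (∑ s, δs s) / (D₁ + D₂) := by
          rw [← Finset.sum_div, ← Finset.mul_sum]
      _ = D₁ * D₂ * δ / (D₁ + D₂) := by rw [hδ]
  -- Conclusion
  have hfin : (D₁ * ‖c₁‖) ^ 2 ≤ D₁ * D₂ * δ / (D₁ + D₂) := by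
    have h4 : ‖(D₁ : ℂ) * c₁‖ = D₁ * ‖c₁‖ := by
      rw [norm_mul, Complex.norm_real, Real.norm_eq_abs, abs_of_pos hD1pos]
    calc (D₁ * ‖c₁‖) ^ 2 = ‖(D₁ : ℂ) * c₁‖ ^ 2 := by rw [h4]
      _ ≤ S ^ 2 := pow_le_pow_left₀ (norm_nonneg _) hnormle 2
      _ ≤ ∑ s, B s ^ 2 / g s := hCS
      _ ≤ D₁ * D₂ * δ / (D₁ + D₂) := hsum
  have hexp : (D₁ * ‖c₁‖) ^ 2 = D₁ * (D₁ * ‖c₁‖ ^ 2) := by ring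
  have h5 : D₁ * (D₁ * ‖c₁‖ ^ 2) ≤ D₁ * (δ * D₂ / (D₁ + D₂)) := by
    rw [← hexp]
    calc (D₁ * ‖c₁‖) ^ 2 ≤ D₁ * D₂ * δ / (D₁ + D₂) := hfin
      _ = D₁ * (δ * D₂ / (D₁ + D₂)) := by ring
  exact le_of_mul_le_mul_left h5 hD1pos
end
end
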